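/- arXiv:0705.0840 — 3 statements merged into one kernel-verified Lean document; each statement's English description precedes it below -/
import Mathlib

section
/- There is a constant C = C(n) such that for every dyadic cube Q in ℝⁿ and every h ∈ BMO(ℝⁿ), (1/|Q|) ∫_Q Σ_{k : 2^{-k} ≤ ℓ(Q)} |Δ_k h(x)|² dx ≤ C ‖h‖²_{BMO}. -/
open MeasureTheory Set
open scoped Classical

noncomputable section

/-- Axis-parallel cube in `ℝⁿ` with center `c` and "radius" (half side length) `r`. -/
def cubeSet (n : ℕ) (c : Fin n → ℝ) (r : ℝ) : Set (Fin n → ℝ) :=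
  {x | ∀ i, |x i - c i| ≤ r}

/-- Average `(1/|s|) ∫_s f` of `f` over the set `s` (Lebesgue measure). -/
def avgOn (n : ℕ) (s : Set (Fin n → ℝ)) (f : (Fin n → ℝ) → ℝ) : ℝ :=
  (volume s).toReal⁻¹ * ∫ x in s, f x

/-- A dyadic cube of generation `k` (side length `2^{-k}`) in `ℝⁿ`. -/
structure DyadicCube (n : ℕ) where
  k : ℤ
  m : Fin n → ℤ

/-- The underlying set of a dyadic cube. -/
def DyadicCube.set {n : ℕ} (Q : DyadicCube n) : Set (Fin n → ℝ) :=
  {x | ∀ i, (Q.m i : ℝ) ≤ (2:ℝ) ^ Q.k * x i ∧ (2:ℝ) ^ Q.k * x i < (Q.m i : ℝ) + 1}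

/-- Center of a dyadic cube. -/
def DyadicCube.center {n : ℕ} (Q : DyadicCube n) : Fin n → ℝ :=
  fun i => ((Q.m i : ℝ) + 1 / 2) * (2:ℝ) ^ (-Q.k)

/-- Concentric dilate `aQ` of a dyadic cube `Q`. -/
def DyadicCube.dilate {n : ℕ} (Q : DyadicCube n) (a : ℝ) : Set (Fin n → ℝ) :=
  cubeSet n Q.center (a * (2:ℝ) ^ (-Q.k) / 2)

/-- `Q'` is a dyadic child of `Q`. -/
def isChild {n : ℕ} (Q' Q : DyadicCube n) : Prop :=
  Q'.k = Q.k + 1 ∧ Q'.set ⊆ Q.set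

/-- The dyadic cube (as a set) of generation `k` containing `x`. -/
def dyadicPiece (n : ℕ) (k : ℤ) (x : Fin n → ℝ) : Set (Fin n → ℝ) :=
  {y | ∀ i, ⌊(2:ℝ) ^ k * y i⌋ = ⌊(2:ℝ) ^ k * x i⌋}

/-- The dyadic cube of generation `k` containing `x`. -/
def dyadicOf (n : ℕ) (k : ℤ) (x : Fin n → ℝ) : DyadicCube n :=
  ⟨k, fun i => ⌊(2:ℝ) ^ k * x i⌋⟩

/-- Dyadic conditional expectation `E_k f(x) = (1/|Q|)∫_Q f`, `Q ∈ 𝔻_k`, `x ∈ Q`. -/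
def Ek (n : ℕ) (k : ℤ) (f : (Fin n → ℝ) → ℝ) (x : Fin n → ℝ) : ℝ :=
  (2:ℝ) ^ (k * (n:ℤ)) * ∫ y in dyadicPiece n k x, f y

/-- Dyadic martingale difference `Δ_k = E_{k+1} - E_k`. -/
def MDk (n : ℕ) (k : ℤ) (f : (Fin n → ℝ) → ℝ) (x : Fin n → ℝ) : ℝ :=
  Ek n (k + 1) f x - Ek n k f x

/-- Adapted expectation `E_k^b f = E_k(fb)/E_k(b)`. -/
def Ekb (n : ℕ) (b : (Fin n → ℝ) → ℝ) (k : ℤ) (f : (Fin n → ℝ) → ℝ) (x : Fin n → ℝ) : ℝ :=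
  Ek n k (fun y => f y * b y) x / Ek n k b x

/-- Adapted martingale difference `Δ_k^b = E_{k+1}^b - E_k^b`. -/
def MDkb (n : ℕ) (b : (Fin n → ℝ) → ℝ) (k : ℤ) (f : (Fin n → ℝ) → ℝ) (x : Fin n → ℝ) : ℝ :=
  Ekb n b (k + 1) f x - Ekb n b k f x

/-- Transposed adapted expectation `A_k^b f = b ⋅ E_k f / E_k b`. -/
def Akb (n : ℕ) (b : (Fin n → ℝ) → ℝ) (k : ℤ) (f : (Fin n → ℝ) → ℝ) (x : Fin n → ℝ) : ℝ :=
  b x * Ek n k f x / Ek n k b x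

/-- `D_k^b = A_{k+1}^b - A_k^b`, the transpose of `Δ_k^b`. -/
def TDkb (n : ℕ) (b : (Fin n → ℝ) → ℝ) (k : ℤ) (f : (Fin n → ℝ) → ℝ) (x : Fin n → ℝ) : ℝ :=
  Akb n b (k + 1) f x - Akb n b k f x

/-- The operator `Λ_Q^b` with kernel `λ_Q^b(x,y)`, so that `Λ_Q^b (b g) = Δ_Q^b g`. -/
def Lam (n : ℕ) (b : (Fin n → ℝ) → ℝ) (Q : DyadicCube n) (h : (Fin n → ℝ) → ℝ)
    (x : Fin n → ℝ) : ℝ :=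
  Q.set.indicator
    (fun y => Ek n (Q.k + 1) h y / Ek n (Q.k + 1) b y - Ek n Q.k h y / Ek n Q.k b y) x

/-- The discrete sawtooth `Ω = R_{Q₁} ∖ (∪ⱼ R_{P_j})`. -/
def sawtooth (n : ℕ) {ι : Type} (Q₁ : DyadicCube n) (P : ι → DyadicCube n) :
    Set (DyadicCube n) :=
  {Q | Q.set ⊆ Q₁.set ∧ ∀ i, ¬ Q.set ⊆ (P i).set}

/-- `Ω₁`: cubes of `Ω` all of whose dyadic children lie in `Ω`. -/
def sawtoothGood (n : ℕ) {ι : Type} (Q₁ : DyadicCube n) (P : ι → DyadicCube n) :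
    Set (DyadicCube n) :=
  {Q ∈ sawtooth n Q₁ P | ∀ Q', isChild Q' Q → Q' ∈ sawtooth n Q₁ P}

/-- `Ω_buffer`: cubes of `Ω` with at least one dyadic child not in `Ω`. -/
def sawtoothBuffer (n : ℕ) {ι : Type} (Q₁ : DyadicCube n) (P : ι → DyadicCube n) :
    Set (DyadicCube n) :=
  {Q ∈ sawtooth n Q₁ P | ∃ Q', isChild Q' Q ∧ Q' ∉ sawtooth n Q₁ P}

/-- The Hardy–Littlewood maximal function. -/
def maximalFn (n : ℕ) (f : (Fin n → ℝ) → ℝ) (x : Fin n → ℝ) : ℝ :=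
  ⨆ r : {r : ℝ // 0 < r}, avgOn n (Metric.ball x r.1) (fun y => |f y|)

end


noncomputable section
namespace S4
open MeasureTheory Set

variable {n : ℕ}

lemma two_zpow_pos (k : ℤ) : (0:ℝ) < 2 ^ k := zpow_pos (by norm_num) k

lemma set_eq_pi (R : DyadicCube n) :
    R.set = Set.univ.pi fun i =>
      Ico ((R.m i : ℝ) * (2:ℝ)^(-R.k)) (((R.m i : ℝ)+1) * (2:ℝ)^(-R.k)) := by
  have h2 : (0:ℝ) < 2 ^ R.k := two_zpow_pos _
  ext x
  simp only [DyadicCube.set, Set.mem_setOf_eq, Set.mem_pi, Set.mem_univ, forall_true_left,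
    mem_Ico]
  refine forall_congr' fun i => and_congr ?_ ?_
  · rw [zpow_neg, ← div_eq_mul_inv, div_le_iff₀ h2, mul_comm]
  · rw [zpow_neg, ← div_eq_mul_inv, lt_div_iff₀ h2, mul_comm]

lemma measurableSet_set (R : DyadicCube n) : MeasurableSet R.set := by
  rw [set_eq_pi]
  exact MeasurableSet.univ_pi fun i => measurableSet_Ico

/-- real volume of a dyadic cube -/
def vol (R : DyadicCube n) : ℝ := (2:ℝ) ^ (-(R.k * (n:ℤ)))

lemma vol_pos (R : DyadicCube n) : 0 < vol R := two_zpow_pos _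

lemma volume_set (R : DyadicCube n) : volume R.set = ENNReal.ofReal (vol R) := by
  rw [set_eq_pi, volume_pi_pi]
  have : ∀ i : Fin n, volume (Ico ((R.m i : ℝ) * (2:ℝ)^(-R.k)) (((R.m i : ℝ)+1) * (2:ℝ)^(-R.k)))
      = ENNReal.ofReal ((2:ℝ)^(-R.k)) := by
    intro i
    rw [Real.volume_Ico]
    congr 1
    ring
  simp_rw [this]
  rw [Finset.prod_const, ← ENNReal.ofReal_pow (le_of_lt (two_zpow_pos _))]
  congr 1
  rw [Finset.card_univ, Fintype.card_fin, vol, ← zpow_natCast ((2:ℝ)^(-R.k)) n, ← zpow_mul]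
  ring_nf

end S4

noncomputable section
namespace S4
open MeasureTheory Set

variable {n : ℕ}

lemma mem_set_iff_floor {R : DyadicCube n} {x : Fin n → ℝ} :
    x ∈ R.set ↔ ∀ i, ⌊(2:ℝ) ^ R.k * x i⌋ = R.m i := by
  simp only [DyadicCube.set, Set.mem_setOf_eq]
  refine forall_congr' fun i => ?_
  rw [Int.floor_eq_iff]

lemma dyadicPiece_eq (k : ℤ) (x : Fin n → ℝ) :
    dyadicPiece n k x = (dyadicOf n k x).set := by
  ext y
  rw [mem_set_iff_floor]
  rfl

/-- average of `h` over a dyadic cube -/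
def av (h : (Fin n → ℝ) → ℝ) (R : DyadicCube n) : ℝ :=
  (2:ℝ) ^ (R.k * (n:ℤ)) * ∫ x in R.set, h x

lemma Ek_eq_av (h : (Fin n → ℝ) → ℝ) (k : ℤ) (x : Fin n → ℝ) :
    Ek n k h x = av h (dyadicOf n k x) := by
  rw [Ek, dyadicPiece_eq, av]
  rfl

lemma dyadicOf_eq_self {R : DyadicCube n} {x : Fin n → ℝ} (hx : x ∈ R.set) :
    dyadicOf n R.k x = R := by
  rw [mem_set_iff_floor] at hx
  cases R with
  | mk k m => simp only [dyadicOf, DyadicCube.mk.injEq]; exact ⟨trivial, funext hx⟩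

lemma Ek_eq_av_of_mem {R : DyadicCube n} {x : Fin n → ℝ} (hx : x ∈ R.set)
    (h : (Fin n → ℝ) → ℝ) : Ek n R.k h x = av h R := by
  rw [Ek_eq_av, dyadicOf_eq_self hx]

/-- the dyadic children -/
def ch (R : DyadicCube n) (ε : Fin n → Bool) : DyadicCube n :=
  ⟨R.k + 1, fun i => 2 * R.m i + (if ε i then 1 else 0)⟩

lemma ch_k (R : DyadicCube n) (ε : Fin n → Bool) : (ch R ε).k = R.k + 1 := rfl

lemma mem_ch_iff {R : DyadicCube n} {ε : Fin n → Bool} {x : Fin n → ℝ} :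
    x ∈ (ch R ε).set ↔ ∀ i,
      ((2 * R.m i + (if ε i then 1 else 0) : ℤ) : ℝ) ≤ (2:ℝ)^(R.k+1) * x i ∧
      (2:ℝ)^(R.k+1) * x i < ((2 * R.m i + (if ε i then 1 else 0) : ℤ) : ℝ) + 1 := Iff.rfl

lemma ch_subset (R : DyadicCube n) (ε : Fin n → Bool) : (ch R ε).set ⊆ R.set := by
  intro x hx
  rw [mem_ch_iff] at hx
  intro i
  rcases hx i with ⟨h1, h2⟩
  have h2k : ((2:ℝ)^(R.k+1)) = 2 * (2:ℝ)^R.k := by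
    rw [zpow_add₀ (by norm_num : (2:ℝ) ≠ 0)]; ring
  rw [h2k] at h1 h2
  push_cast at h1 h2
  constructor
  · rcases Bool.dichotomy (ε i) with he | he <;> simp [he] at h1 <;> nlinarith
  · rcases Bool.dichotomy (ε i) with he | he <;> simp [he] at h2 <;> nlinarith

lemma exists_ch (R : DyadicCube n) {x : Fin n → ℝ} (hx : x ∈ R.set) :
    x ∈ (ch R (fun i => decide ((2 * R.m i + 1 : ℝ) ≤ (2:ℝ)^(R.k+1) * x i))).set := by
  rw [mem_ch_iff]
  intro i
  rcases hx i with ⟨h1, h2⟩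
  have h2k : ((2:ℝ)^(R.k+1)) = 2 * (2:ℝ)^R.k := by
    rw [zpow_add₀ (by norm_num : (2:ℝ) ≠ 0)]; ring
  by_cases hd : (2 * R.m i + 1 : ℝ) ≤ (2:ℝ)^(R.k+1) * x i
  · simp only [ch, decide_eq_true_eq]
    rw [if_pos hd]
    push_cast
    rw [h2k] at hd ⊢
    constructor
    · linarith
    · linarith
  · simp only [ch, decide_eq_true_eq]
    rw [if_neg hd]
    push_cast
    rw [h2k] at hd ⊢
    push_neg at hd
    constructor
    · linarith
    · linarith

lemma ch_disjoint (R : DyadicCube n) {ε ε' : Fin n → Bool} (hne : ε ≠ ε') :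
    Disjoint (ch R ε).set (ch R ε').set := by
  rw [Set.disjoint_left]
  intro x hx hx'
  apply hne
  funext i
  have h1 := (mem_set_iff_floor.1 hx) i
  have h2 := (mem_set_iff_floor.1 hx') i
  rw [ch_k] at h1 h2
  have : (ch R ε).m i = (ch R ε').m i := by rw [← h1, ← h2]
  simp only [ch] at this
  rcases Bool.dichotomy (ε i) with he | he <;> rcases Bool.dichotomy (ε' i) with he' | he' <;>
    simp [he, he'] at this ⊢ <;> omega

lemma set_eq_iUnion_ch (R : DyadicCube n) : R.set = ⋃ ε : Fin n → Bool, (ch R ε).set := by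
  apply Set.Subset.antisymm
  · intro x hx
    exact Set.mem_iUnion.2 ⟨_, exists_ch R hx⟩
  · exact Set.iUnion_subset fun ε => ch_subset R ε

end S4

noncomputable section
namespace S4
open MeasureTheory Set

variable {n : ℕ}

lemma set_subset_closed (R : DyadicCube n) :
    R.set ⊆ cubeSet n R.center ((2:ℝ)^(-R.k)/2) := by
  intro x hx i
  rcases hx i with ⟨h1, h2⟩
  have h2pos : (0:ℝ) < 2 ^ R.k := two_zpow_pos _
  have hinv : (2:ℝ)^(-R.k) = ((2:ℝ)^R.k)⁻¹ := zpow_neg 2 R.k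
  rw [DyadicCube.center, abs_le]
  have e1 : ((R.m i : ℝ)) * (2:ℝ)^(-R.k) ≤ x i := by
    rw [hinv, ← div_eq_mul_inv, div_le_iff₀ h2pos, mul_comm]; exact h1
  have e2 : x i < ((R.m i : ℝ) + 1) * (2:ℝ)^(-R.k) := by
    rw [hinv, ← div_eq_mul_inv, lt_div_iff₀ h2pos, mul_comm]; exact h2
  have hp : (0:ℝ) < (2:ℝ)^(-R.k) := two_zpow_pos _
  constructor <;> nlinarith

lemma cubeSet_eq_pi (c : Fin n → ℝ) (r : ℝ) :
    cubeSet n c r = Set.univ.pi fun i => Icc (c i - r) (c i + r) := by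
  ext x
  simp only [cubeSet, Set.mem_setOf_eq, Set.mem_pi, Set.mem_univ, forall_true_left, mem_Icc]
  refine forall_congr' fun i => ?_
  rw [abs_le]
  constructor <;> intro ⟨a, b⟩ <;> constructor <;> linarith

lemma volume_cubeSet (c : Fin n → ℝ) {r : ℝ} (hr : 0 ≤ r) :
    volume (cubeSet n c r) = ENNReal.ofReal ((2*r)^n) := by
  rw [cubeSet_eq_pi, volume_pi_pi]
  have : ∀ i : Fin n, volume (Icc (c i - r) (c i + r)) = ENNReal.ofReal (2*r) := by
    intro i; rw [Real.volume_Icc]; congr 1; ring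
  simp_rw [this]
  rw [Finset.prod_const, ← ENNReal.ofReal_pow (by linarith), Finset.card_univ, Fintype.card_fin]

lemma volume_closed (R : DyadicCube n) :
    volume (cubeSet n R.center ((2:ℝ)^(-R.k)/2)) = ENNReal.ofReal (vol R) := by
  rw [volume_cubeSet _ (by positivity)]
  congr 1
  have : (2 * ((2:ℝ)^(-R.k)/2)) = (2:ℝ)^(-R.k) := by ring
  rw [this, vol, ← zpow_natCast ((2:ℝ)^(-R.k)) n, ← zpow_mul]
  ring_nf

lemma set_ae_eq_closed (R : DyadicCube n) :
    R.set =ᵐ[volume] cubeSet n R.center ((2:ℝ)^(-R.k)/2) := by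
  have hsub := set_subset_closed R
  have hm : MeasurableSet (cubeSet n R.center ((2:ℝ)^(-R.k)/2)) := by
    rw [cubeSet_eq_pi]; exact MeasurableSet.univ_pi fun i => measurableSet_Icc
  refine MeasureTheory.ae_eq_of_subset_of_measure_ge hsub ?_
    (measurableSet_set R).nullMeasurableSet ?_
  · rw [volume_set, volume_closed]
  · rw [volume_closed]; exact ENNReal.ofReal_lt_top.ne

lemma integrableOn_set {h : (Fin n → ℝ) → ℝ} (hh : LocallyIntegrable h volume)
    (R : DyadicCube n) : IntegrableOn h R.set := by
  have hcmp : IsCompact (cubeSet n R.center ((2:ℝ)^(-R.k)/2)) := by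
    rw [cubeSet_eq_pi]
    exact isCompact_univ_pi fun i => isCompact_Icc
  exact (hh.integrableOn_isCompact hcmp).mono_set (set_subset_closed R)

lemma integral_eq_closed (R : DyadicCube n) (f : (Fin n → ℝ) → ℝ) :
    ∫ x in R.set, f x = ∫ x in cubeSet n R.center ((2:ℝ)^(-R.k)/2), f x :=
  setIntegral_congr_set (set_ae_eq_closed R)

lemma vol_toReal (R : DyadicCube n) : (volume R.set).toReal = vol R := by
  rw [volume_set, ENNReal.toReal_ofReal (vol_pos R).le]

lemma zpow_mul_vol (R : DyadicCube n) : (2:ℝ) ^ (R.k * (n:ℤ)) * vol R = 1 := by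
  rw [vol, ← zpow_add₀ (by norm_num : (2:ℝ) ≠ 0)]
  simp

lemma av_mul_vol (h : (Fin n → ℝ) → ℝ) (R : DyadicCube n) :
    av h R * vol R = ∫ x in R.set, h x := by
  rw [av, mul_comm ((2:ℝ) ^ (R.k * (n:ℤ))) _, mul_assoc, zpow_mul_vol, mul_one]

/-- `avgOn` over the closed cube is `av` -/
lemma avgOn_closed (h : (Fin n → ℝ) → ℝ) (R : DyadicCube n) :
    avgOn n (cubeSet n R.center ((2:ℝ)^(-R.k)/2)) h = av h R := by
  rw [avgOn, ← integral_eq_closed, volume_closed, ENNReal.toReal_ofReal (vol_pos R).le, av]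
  congr 1
  rw [vol, ← zpow_neg, neg_neg]

lemma vol_ch (R : DyadicCube n) (ε : Fin n → Bool) :
    vol (ch R ε) = (2:ℝ)^(-(n:ℤ)) * vol R := by
  rw [vol, vol, ch_k, ← zpow_add₀ (by norm_num : (2:ℝ) ≠ 0)]
  congr 1
  ring

lemma sum_vol_ch (R : DyadicCube n) : ∑ ε : Fin n → Bool, vol (ch R ε) = vol R := by
  simp_rw [vol_ch]
  rw [Finset.sum_const, Finset.card_univ, nsmul_eq_mul]
  have hc : Fintype.card (Fin n → Bool) = 2 ^ n := by simp
  have : (Fintype.card (Fin n → Bool) : ℝ) = (2:ℝ)^(n:ℤ) := by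
    rw [hc]; push_cast; rw [← zpow_natCast]
  rw [this, ← mul_assoc, ← zpow_add₀ (by norm_num : (2:ℝ) ≠ 0)]
  simp

lemma integral_sum_ch {f : (Fin n → ℝ) → ℝ} (R : DyadicCube n)
    (hf : IntegrableOn f R.set) :
    ∫ x in R.set, f x = ∑ ε : Fin n → Bool, ∫ x in (ch R ε).set, f x := by
  have h1 : ∫ x in R.set, f x = ∫ x in ⋃ ε : Fin n → Bool, (ch R ε).set, f x := by
    rw [← set_eq_iUnion_ch]
  rw [h1, integral_iUnion_fintype (fun ε => measurableSet_set _)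
    (fun ε ε' hne => ch_disjoint R hne) ?_]
  intro ε
  exact hf.mono_set (ch_subset R ε)

end S4

noncomputable section
namespace S4
open MeasureTheory Set

variable {n : ℕ} {h : (Fin n → ℝ) → ℝ} {N : ℝ}

lemma integrableOn_abs_sub (hh : LocallyIntegrable h volume) (z : ℝ) (R : DyadicCube n) :
    IntegrableOn (fun x => |h x - z|) R.set := by
  exact ((integrableOn_set hh R).sub (integrableOn_const
    (by rw [volume_set]; exact ENNReal.ofReal_lt_top.ne))).abs

lemma bmo_int (hh : LocallyIntegrable h volume)
    (hbmo : ∀ (c : Fin n → ℝ) (r : ℝ), 0 < r →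
      avgOn n (cubeSet n c r) (fun x => |h x - avgOn n (cubeSet n c r) h|) ≤ N)
    (R : DyadicCube n) :
    ∫ x in R.set, |h x - av h R| ≤ N * vol R := by
  have hr : (0:ℝ) < (2:ℝ)^(-R.k)/2 := by positivity
  have key := hbmo R.center ((2:ℝ)^(-R.k)/2) hr
  rw [avgOn, avgOn_closed, volume_closed, ENNReal.toReal_ofReal (vol_pos R).le,
    ← integral_eq_closed R (fun x => |h x - av h R|)] at key
  have hv := vol_pos R
  calc ∫ x in R.set, |h x - av h R|
      = vol R * ((vol R)⁻¹ * ∫ x in R.set, |h x - av h R|) := by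
        field_simp
    _ ≤ vol R * N := by
        exact mul_le_mul_of_nonneg_left key hv.le
    _ = N * vol R := mul_comm _ _

lemma integral_const_set (R : DyadicCube n) (z : ℝ) :
    ∫ _ in R.set, z = z * vol R := by
  rw [setIntegral_const, smul_eq_mul, measureReal_def, vol_toReal, mul_comm]

lemma contraction (hh : LocallyIntegrable h volume) (z : ℝ) (R : DyadicCube n) :
    |av h R - z| * vol R ≤ ∫ x in R.set, |h x - z| := by
  have hv := vol_pos R
  have h1 : (av h R - z) * vol R = ∫ x in R.set, (h x - z) := by
    rw [integral_sub (integrableOn_set hh R) (integrableOn_const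
      (by rw [volume_set]; exact ENNReal.ofReal_lt_top.ne))]
    rw [integral_const_set, ← av_mul_vol]
    ring
  have h2 : |av h R - z| * vol R = |(av h R - z) * vol R| := by
    rw [abs_mul, abs_of_nonneg hv.le]
  rw [h2, h1]
  simpa [Real.norm_eq_abs] using
    norm_integral_le_integral_norm (μ := volume.restrict R.set) (fun x => h x - z)

lemma int_abs_mono (hh : LocallyIntegrable h volume) (z : ℝ) (R : DyadicCube n)
    (ε : Fin n → Bool) :
    ∫ x in (ch R ε).set, |h x - z| ≤ ∫ x in R.set, |h x - z| := by
  apply setIntegral_mono_set (integrableOn_abs_sub hh z R)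
  · filter_upwards with x using abs_nonneg _
  · exact HasSubset.Subset.eventuallyLE (ch_subset R ε)

lemma child_diff_bound (hh : LocallyIntegrable h volume)
    (hbmo : ∀ (c : Fin n → ℝ) (r : ℝ), 0 < r →
      avgOn n (cubeSet n c r) (fun x => |h x - avgOn n (cubeSet n c r) h|) ≤ N)
    (R : DyadicCube n) (ε : Fin n → Bool) :
    |av h (ch R ε) - av h R| ≤ (2:ℝ)^(n:ℤ) * N := by
  have h1 := contraction hh (av h R) (ch R ε)
  have h2 := int_abs_mono hh (av h R) R ε
  have h3 := bmo_int hh hbmo R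
  have hvc := vol_pos (ch R ε)
  have key : |av h (ch R ε) - av h R| * vol (ch R ε) ≤ N * vol R := le_trans h1 (le_trans h2 h3)
  have hvol : vol R = (2:ℝ)^(n:ℤ) * vol (ch R ε) := by
    rw [vol_ch, ← mul_assoc, ← zpow_add₀ (by norm_num : (2:ℝ) ≠ 0)]
    simp
  rw [hvol] at key
  nlinarith [key, hvc]

lemma sum_av_ch (hh : LocallyIntegrable h volume) (R : DyadicCube n) :
    ∑ ε : Fin n → Bool, av h (ch R ε) * vol (ch R ε) = av h R * vol R := by
  simp_rw [av_mul_vol]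
  exact (integral_sum_ch R (integrableOn_set hh R)).symm

lemma sq_identity (a w : (Fin n → Bool) → ℝ) (m z W : ℝ)
    (hw : ∑ ε : Fin n → Bool, w ε = W) (hm : ∑ ε : Fin n → Bool, a ε * w ε = m * W) :
    ∑ ε : Fin n → Bool, (a ε - z)^2 * w ε
      = (∑ ε : Fin n → Bool, (a ε - m)^2 * w ε) + (m - z)^2 * W := by
  have key : ∀ ε, (a ε - z)^2 * w ε
      = ((a ε - m)^2 * w ε + (m - z)^2 * w ε + (2*(m - z)) * (a ε * w ε))
        - (2*(m-z)*m) * w ε := by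
    intro ε; ring
  rw [Finset.sum_congr rfl (fun ε _ => key ε), Finset.sum_sub_distrib]
  simp only [Finset.sum_add_distrib, ← Finset.mul_sum]
  rw [hw, hm]
  ring

end S4

noncomputable section
namespace S4
open MeasureTheory Set

variable {n : ℕ}

/-- total square function sum over descendants up to depth `K` -/
def Gsum (h : (Fin n → ℝ) → ℝ) : ℕ → DyadicCube n → ℝ
  | 0, _ => 0
  | (K+1), R => (∑ ε : Fin n → Bool, (av h (ch R ε) - av h R)^2 * vol (ch R ε))
      + ∑ ε : Fin n → Bool, Gsum h K (ch R ε)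

def goodP (h : (Fin n → ℝ) → ℝ) (lam z : ℝ) : ℕ → DyadicCube n → ℝ
  | 0, _ => 0
  | (K+1), R => if |av h R - z| ≤ lam then
      (∑ ε : Fin n → Bool, (av h (ch R ε) - av h R)^2 * vol (ch R ε))
        + ∑ ε : Fin n → Bool, goodP h lam z K (ch R ε)
    else 0

def badP (h : (Fin n → ℝ) → ℝ) (lam z : ℝ) : ℕ → DyadicCube n → ℝ
  | 0, _ => 0
  | (K+1), R => if |av h R - z| ≤ lam then ∑ ε : Fin n → Bool, badP h lam z K (ch R ε)
    else Gsum h (K+1) R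

def badmu (h : (Fin n → ℝ) → ℝ) (lam z : ℝ) : ℕ → DyadicCube n → ℝ
  | 0, _ => 0
  | (K+1), R => if |av h R - z| ≤ lam then ∑ ε : Fin n → Bool, badmu h lam z K (ch R ε)
    else vol R

variable {h : (Fin n → ℝ) → ℝ} {N lam z c : ℝ}

lemma Gsum_nonneg (h : (Fin n → ℝ) → ℝ) : ∀ K (R : DyadicCube n), 0 ≤ Gsum h K R := by
  intro K
  induction K with
  | zero => intro R; exact le_refl 0
  | succ K ih =>
    intro R
    apply add_nonneg
    · exact Finset.sum_nonneg fun ε _ => mul_nonneg (sq_nonneg _) (vol_pos _).le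
    · exact Finset.sum_nonneg fun ε _ => ih _

lemma goodP_of_not {K : ℕ} {R : DyadicCube n} (hbad : ¬ |av h R - z| ≤ lam) :
    goodP h lam z K R = 0 := by
  cases K with
  | zero => rfl
  | succ K => exact if_neg hbad

lemma Gsum_le_good_add_bad : ∀ K (R : DyadicCube n),
    Gsum h K R ≤ goodP h lam z K R + badP h lam z K R := by
  intro K
  induction K with
  | zero => intro R; simp [Gsum, goodP, badP]
  | succ K ih =>
    intro R
    by_cases hg : |av h R - z| ≤ lam
    · show Gsum h (K+1) R ≤ goodP h lam z (K+1) R + badP h lam z (K+1) R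
      rw [goodP, badP, if_pos hg, if_pos hg, Gsum]
      have : ∑ ε : Fin n → Bool, Gsum h K (ch R ε)
          ≤ (∑ ε : Fin n → Bool, goodP h lam z K (ch R ε))
            + ∑ ε : Fin n → Bool, badP h lam z K (ch R ε) := by
        rw [← Finset.sum_add_distrib]
        exact Finset.sum_le_sum fun ε _ => ih (ch R ε)
      linarith
    · rw [goodP_of_not (K := K+1) hg, badP, if_neg hg, zero_add]

lemma goodP_bound (hh : LocallyIntegrable h volume) (hlam : 0 ≤ lam) {b : ℝ} (hb0 : 0 ≤ b)
    (hb : ∀ (R : DyadicCube n) ε, |av h (ch R ε) - av h R| ≤ b) :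
    ∀ K (R : DyadicCube n), |av h R - z| ≤ lam →
      goodP h lam z K R + (av h R - z)^2 * vol R ≤ (lam + b)^2 * vol R := by
  intro K
  induction K with
  | zero =>
    intro R hg
    rw [goodP, zero_add]
    apply mul_le_mul_of_nonneg_right _ (vol_pos R).le
    obtain ⟨hg1, hg2⟩ := abs_le.1 hg
    nlinarith
  | succ K ih =>
    intro R hg
    rw [goodP, if_pos hg]
    have hiden := sq_identity (fun ε => av h (ch R ε)) (fun ε => vol (ch R ε))
      (av h R) z (vol R) (sum_vol_ch R) (sum_av_ch hh R)
    have key : ∀ ε : Fin n → Bool,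
        goodP h lam z K (ch R ε) + (av h (ch R ε) - z)^2 * vol (ch R ε)
          ≤ (lam + b)^2 * vol (ch R ε) := by
      intro ε
      by_cases hgc : |av h (ch R ε) - z| ≤ lam
      · exact ih (ch R ε) hgc
      · rw [goodP_of_not hgc, zero_add]
        apply mul_le_mul_of_nonneg_right _ (vol_pos _).le
        have h1 : |av h (ch R ε) - z| ≤ lam + b := by
          have := hb R ε
          have := abs_sub_abs_le_abs_sub (av h (ch R ε) - z) (av h R - z)
          have h3 : (av h (ch R ε) - z) - (av h R - z) = av h (ch R ε) - av h R := by ring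
          rw [h3] at this
          linarith [abs_le.1 hg, this, hb R ε]
        calc (av h (ch R ε) - z)^2 = |av h (ch R ε) - z|^2 := (sq_abs _).symm
          _ ≤ (lam + b)^2 := by nlinarith [abs_nonneg (av h (ch R ε) - z)]
    calc ((∑ ε : Fin n → Bool, (av h (ch R ε) - av h R)^2 * vol (ch R ε))
            + ∑ ε : Fin n → Bool, goodP h lam z K (ch R ε)) + (av h R - z)^2 * vol R
        = ∑ ε : Fin n → Bool,
            (goodP h lam z K (ch R ε) + (av h (ch R ε) - z)^2 * vol (ch R ε)) := by
          rw [Finset.sum_add_distrib]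
          linarith [hiden]
      _ ≤ ∑ ε : Fin n → Bool, (lam + b)^2 * vol (ch R ε) :=
          Finset.sum_le_sum fun ε _ => key ε
      _ = (lam + b)^2 * vol R := by rw [← Finset.mul_sum, sum_vol_ch]

lemma badP_le (hc0 : 0 ≤ c) :
    ∀ K, (∀ j, j ≤ K → ∀ S : DyadicCube n, Gsum h j S ≤ c * vol S) →
      ∀ R : DyadicCube n, badP h lam z K R ≤ c * badmu h lam z K R := by
  intro K
  induction K with
  | zero => intro _ R; rw [badP, badmu, mul_zero]
  | succ K ih =>
    intro hc R
    by_cases hg : |av h R - z| ≤ lam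
    · rw [badP, badmu, if_pos hg, if_pos hg, Finset.mul_sum]
      exact Finset.sum_le_sum fun ε _ => ih (fun j hj S => hc j (le_trans hj (Nat.le_succ K)) S)
        (ch R ε)
    · rw [badP, badmu, if_neg hg, if_neg hg]
      exact hc (K+1) (le_refl _) R

lemma badmu_nonneg : ∀ K (R : DyadicCube n), 0 ≤ badmu h lam z K R := by
  intro K
  induction K with
  | zero => intro R; exact le_refl 0
  | succ K ih =>
    intro R
    by_cases hg : |av h R - z| ≤ lam
    · rw [badmu, if_pos hg]; exact Finset.sum_nonneg fun ε _ => ih _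
    · rw [badmu, if_neg hg]; exact (vol_pos R).le

lemma badmu_le (hh : LocallyIntegrable h volume) :
    ∀ K (R : DyadicCube n), lam * badmu h lam z K R ≤ ∫ x in R.set, |h x - z| := by
  intro K
  induction K with
  | zero =>
    intro R
    rw [badmu, mul_zero]
    exact setIntegral_nonneg (measurableSet_set R) fun x _ => abs_nonneg _
  | succ K ih =>
    intro R
    by_cases hg : |av h R - z| ≤ lam
    · rw [badmu, if_pos hg, Finset.mul_sum]
      rw [integral_sum_ch R (integrableOn_abs_sub hh z R)]
      exact Finset.sum_le_sum fun ε _ => ih (ch R ε)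
    · rw [badmu, if_neg hg]
      push_neg at hg
      calc lam * vol R ≤ |av h R - z| * vol R :=
            mul_le_mul_of_nonneg_right hg.le (vol_pos R).le
        _ ≤ ∫ x in R.set, |h x - z| := contraction hh z R

lemma Gsum_zero_of (hh : LocallyIntegrable h volume) :
    ∀ K (R : DyadicCube n), (∫ x in R.set, |h x - z|) = 0 → Gsum h K R = 0 := by
  intro K
  induction K with
  | zero => intro R _; rfl
  | succ K ih =>
    intro R hz
    have havR : av h R = z := by
      have := contraction hh z R
      rw [hz] at this
      have hv := vol_pos R
      have : |av h R - z| = 0 := by nlinarith [abs_nonneg (av h R - z)]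
      have := abs_eq_zero.1 this
      linarith
    have hch : ∀ ε : Fin n → Bool, (∫ x in (ch R ε).set, |h x - z|) = 0 := by
      intro ε
      have hle := int_abs_mono hh z R ε
      have hge : 0 ≤ ∫ x in (ch R ε).set, |h x - z| :=
        setIntegral_nonneg (measurableSet_set _) fun x _ => abs_nonneg _
      linarith [hz ▸ hle]
    have havch : ∀ ε : Fin n → Bool, av h (ch R ε) = z := by
      intro ε
      have := contraction hh z (ch R ε)
      rw [hch ε] at this
      have hv := vol_pos (ch R ε)
      have : |av h (ch R ε) - z| = 0 := by nlinarith [abs_nonneg (av h (ch R ε) - z)]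
      have := abs_eq_zero.1 this
      linarith
    rw [Gsum]
    have e1 : ∀ ε : Fin n → Bool, (av h (ch R ε) - av h R)^2 * vol (ch R ε) = 0 := by
      intro ε; rw [havch ε, havR]; ring
    rw [Finset.sum_congr rfl fun ε _ => e1 ε,
      Finset.sum_congr rfl fun ε _ => ih (ch R ε) (hch ε)]
    simp

/-- the main combinatorial estimate -/
theorem Gsum_main (hh : LocallyIntegrable h volume) (hN0 : 0 ≤ N)
    (hbmo : ∀ (c : Fin n → ℝ) (r : ℝ), 0 < r →
      avgOn n (cubeSet n c r) (fun x => |h x - avgOn n (cubeSet n c r) h|) ≤ N) :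
    ∀ K (R : DyadicCube n),
      Gsum h K R ≤ (2 * (2*N + (2:ℝ)^(n:ℤ)*N)^2) * vol R := by
  have hb0 : (0:ℝ) ≤ (2:ℝ)^(n:ℤ)*N := mul_nonneg (two_zpow_pos _).le hN0
  set b : ℝ := (2:ℝ)^(n:ℤ)*N with hbdef
  set cc : ℝ := 2 * (2*N + b)^2 with hccdef
  have hcc0 : 0 ≤ cc := by positivity
  intro K
  induction K using Nat.strong_induction_on with
  | _ K ihK =>
    cases K with
    | zero => intro R; rw [Gsum]; exact mul_nonneg hcc0 (vol_pos R).le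
    | succ K =>
      intro R
      rcases eq_or_lt_of_le hN0 with hN | hN
      · -- N = 0
        have hz : (∫ x in R.set, |h x - av h R|) = 0 := by
          have h1 := bmo_int hh hbmo R
          rw [← hN] at h1
          have h2 : 0 ≤ ∫ x in R.set, |h x - av h R| :=
            setIntegral_nonneg (measurableSet_set R) fun x _ => abs_nonneg _
          linarith
        rw [Gsum_zero_of hh (K+1) R hz]
        exact mul_nonneg hcc0 (vol_pos R).le
      · -- N > 0
        set lam : ℝ := 2*N with hlamdef
        set z : ℝ := av h R with hzdef
        have hlam0 : 0 ≤ lam := by positivity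
        have hgood : |av h R - z| ≤ lam := by
          rw [hzdef, sub_self, abs_zero]; exact hlam0
        have h1 : Gsum h (K+1) R ≤ goodP h lam z (K+1) R + badP h lam z (K+1) R :=
          Gsum_le_good_add_bad (K+1) R
        have h2 : goodP h lam z (K+1) R ≤ (lam + b)^2 * vol R := by
          have := goodP_bound hh hlam0 hb0 (fun R' ε => child_diff_bound hh hbmo R' ε) (K+1)
            R hgood
          nlinarith [sq_nonneg (av h R - z), vol_pos R]
        have h3 : badP h lam z (K+1) R ≤ cc * badmu h lam z (K+1) R := by
          rw [badP, badmu, if_pos hgood, if_pos hgood, Finset.mul_sum]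
          refine Finset.sum_le_sum fun ε _ => ?_
          exact badP_le hcc0 K (fun j hj S => ihK j (Nat.lt_succ_of_le hj) S) (ch R ε)
        have h4 : badmu h lam z (K+1) R ≤ vol R / 2 := by
          have hm := badmu_le (lam := lam) (z := z) hh (K+1) R
          have hbm : (∫ x in R.set, |h x - z|) ≤ N * vol R := by
            rw [hzdef]; exact bmo_int hh hbmo R
          have := badmu_nonneg (K+1) (R := R) (lam := lam) (z := z) (h := h)
          nlinarith
        have h5 : cc * badmu h lam z (K+1) R ≤ cc * (vol R / 2) :=
          mul_le_mul_of_nonneg_left h4 hcc0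
        have : Gsum h (K+1) R ≤ (lam + b)^2 * vol R + cc * (vol R / 2) := by linarith
        calc Gsum h (K+1) R ≤ (lam + b)^2 * vol R + cc * (vol R / 2) := this
          _ = cc * vol R := by rw [hccdef, hlamdef]; ring

end S4

noncomputable section
namespace S4
open MeasureTheory Set

variable {n : ℕ} {h : (Fin n → ℝ) → ℝ}

/-- level-`j` part of the square function sum -/
def lev (h : (Fin n → ℝ) → ℝ) : ℕ → DyadicCube n → ℝ
  | 0, R => ∑ ε : Fin n → Bool, (av h (ch R ε) - av h R)^2 * vol (ch R ε)
  | (j+1), R => ∑ ε : Fin n → Bool, lev h j (ch R ε)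

lemma MDk_on_ch {R : DyadicCube n} {ε : Fin n → Bool} {x : Fin n → ℝ}
    (hx : x ∈ (ch R ε).set) :
    MDk n R.k h x = av h (ch R ε) - av h R := by
  rw [MDk]
  have h1 : Ek n (R.k + 1) h x = av h (ch R ε) := Ek_eq_av_of_mem (R := ch R ε) hx h
  have h2 : Ek n R.k h x = av h R := Ek_eq_av_of_mem (ch_subset R ε hx) h
  rw [h1, h2]

lemma lev_nonneg : ∀ (j : ℕ) (R : DyadicCube n), 0 ≤ lev h j R := by
  intro j
  induction j with
  | zero =>
    intro R
    exact Finset.sum_nonneg fun ε _ => mul_nonneg (sq_nonneg _) (vol_pos _).le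
  | succ j ih => intro R; exact Finset.sum_nonneg fun ε _ => ih _

lemma intMD (hh : LocallyIntegrable h volume) :
    ∀ (j : ℕ) (R : DyadicCube n),
      IntegrableOn (fun x => (MDk n (R.k + (j:ℤ)) h x)^2) R.set ∧
      ∫ x in R.set, (MDk n (R.k + (j:ℤ)) h x)^2 = lev h j R := by
  intro j
  induction j with
  | zero =>
    intro R
    have hint : ∀ ε : Fin n → Bool,
        IntegrableOn (fun x => (MDk n (R.k + ((0:ℕ):ℤ)) h x)^2) (ch R ε).set := by
      intro ε
      rw [integrableOn_congr_fun (g := fun _ => (av h (ch R ε) - av h R)^2)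
        (fun x hx => by rw [Nat.cast_zero, add_zero, MDk_on_ch hx]) (measurableSet_set _)]
      exact integrableOn_const (by rw [volume_set]; exact ENNReal.ofReal_lt_top.ne)
    have hIR : IntegrableOn (fun x => (MDk n (R.k + ((0:ℕ):ℤ)) h x)^2) R.set := by
      rw [set_eq_iUnion_ch R]
      exact integrableOn_finite_iUnion.2 hint
    refine ⟨hIR, ?_⟩
    rw [integral_sum_ch R hIR, lev]
    congr 1
    funext ε
    rw [setIntegral_congr_fun (measurableSet_set _)
      (fun x hx => by rw [Nat.cast_zero, add_zero, MDk_on_ch hx]), integral_const_set]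
  | succ j ih =>
    intro R
    have hkey : ∀ ε : Fin n → Bool, (ch R ε).k + (j:ℤ) = R.k + ((j:ℕ)+1 : ℕ) := by
      intro ε; rw [ch_k]; push_cast; ring
    have hint : ∀ ε : Fin n → Bool,
        IntegrableOn (fun x => (MDk n (R.k + (((j:ℕ)+1 : ℕ):ℤ)) h x)^2) (ch R ε).set := by
      intro ε
      have := (ih (ch R ε)).1
      rwa [hkey ε] at this
    have hIR : IntegrableOn (fun x => (MDk n (R.k + (((j:ℕ)+1 : ℕ):ℤ)) h x)^2) R.set := by
      rw [set_eq_iUnion_ch R]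
      exact integrableOn_finite_iUnion.2 hint
    refine ⟨hIR, ?_⟩
    rw [integral_sum_ch R hIR, lev]
    congr 1
    funext ε
    have := (ih (ch R ε)).2
    rwa [hkey ε] at this

lemma Gsum_eq_sum_lev : ∀ (K : ℕ) (R : DyadicCube n),
    Gsum h K R = ∑ j ∈ Finset.range K, lev h j R := by
  intro K
  induction K with
  | zero => intro R; rw [Gsum]; simp
  | succ K ih =>
    intro R
    rw [Gsum, Finset.sum_range_succ', add_comm]
    congr 1
    · rw [Finset.sum_congr rfl fun ε (_ : ε ∈ Finset.univ) => ih (ch R ε), Finset.sum_comm]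
      exact Finset.sum_congr rfl fun j _ => by rw [lev]

end S4

noncomputable section
namespace S4
open MeasureTheory Set

variable {n : ℕ}

lemma measurable_Ek (h : (Fin n → ℝ) → ℝ) (k : ℤ) : Measurable (Ek n k h) := by
  have heq : Ek n k h = (fun m : Fin n → ℤ => av h ⟨k, m⟩)
      ∘ (fun (x : Fin n → ℝ) (i : Fin n) => ⌊(2:ℝ)^k * x i⌋) := by
    funext x
    rw [Ek_eq_av]
    rfl
  rw [heq]
  apply (measurable_of_countable _).comp
  exact measurable_pi_lambda _ fun i =>
    Int.measurable_floor.comp (measurable_const.mul (measurable_pi_apply i))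

lemma measurable_MDk (h : (Fin n → ℝ) → ℝ) (k : ℤ) : Measurable (MDk n k h) := by
  show Measurable fun x => Ek n (k+1) h x - Ek n k h x
  exact (measurable_Ek h (k+1)).sub (measurable_Ek h k)

end S4
end


/-- the dyadic Carleson measure estimate for martingale differences of a
BMO function (Proposition 8.6). -/
theorem statement4 (n : ℕ) :
    ∃ C : ℝ, 0 < C ∧
      ∀ h : (Fin n → ℝ) → ℝ, LocallyIntegrable h volume →
        ∀ N : ℝ, 0 ≤ N →
          (∀ (c : Fin n → ℝ) (r : ℝ), 0 < r →
            avgOn n (cubeSet n c r) (fun x => |h x - avgOn n (cubeSet n c r) h|) ≤ N) →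
          ∀ Q : DyadicCube n,
            avgOn n Q.set
                (fun x => ∑' k : ℤ, if Q.k ≤ k then (MDk n k h x) ^ 2 else 0) ≤
              C * N ^ 2 := by

  open S4 in
  refine ⟨2*(2 + (2:ℝ)^(n:ℤ))^2 + 1, by positivity, ?_⟩
  intro h hh N hN0 hbmo Q
  set C : ℝ := 2*(2 + (2:ℝ)^(n:ℤ))^2 + 1 with hC
  set F : (Fin n → ℝ) → ℝ :=
    fun x => ∑' k : ℤ, if Q.k ≤ k then (MDk n k h x) ^ 2 else 0 with hF
  have hterm : ∀ (x : Fin n → ℝ) (k : ℤ),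
      0 ≤ if Q.k ≤ k then (MDk n k h x)^2 else 0 := by
    intro x k
    split_ifs
    · exact sq_nonneg _
    · exact le_refl 0
  have hFnonneg : ∀ x, 0 ≤ F x := fun x => tsum_nonneg (hterm x)
  have hV := S4.vol_pos Q
  set V : ℝ := S4.vol Q with hVdef
  set cc : ℝ := 2*(2*N + (2:ℝ)^(n:ℤ)*N)^2 with hcc
  have hz2 : (0:ℝ) < (2:ℝ)^(n:ℤ) := S4.two_zpow_pos _
  have hcc0 : 0 ≤ cc := by positivity
  have hccC : cc ≤ C * N^2 := by
    have e : cc = 2*(2 + (2:ℝ)^(n:ℤ))^2 * N^2 := by rw [hcc]; ring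
    rw [e, hC]
    nlinarith [sq_nonneg N]
  have hccV0 : 0 ≤ cc * V := mul_nonneg hcc0 hV.le
  -- the lintegral bound
  have hmeas : ∀ k : ℤ, Measurable
      (fun x => ENNReal.ofReal (if Q.k ≤ k then (MDk n k h x)^2 else 0)) := by
    intro k
    by_cases hk : Q.k ≤ k
    · simp only [if_pos hk]
      exact ((S4.measurable_MDk h k).pow_const 2).ennreal_ofReal
    · simp only [if_neg hk]
      exact measurable_const
  have hL : ∫⁻ x in Q.set, ENNReal.ofReal (F x) ≤ ENNReal.ofReal (cc * V) := by
    have step1 : ∀ x, ENNReal.ofReal (F x)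
        ≤ ∑' k : ℤ, ENNReal.ofReal (if Q.k ≤ k then (MDk n k h x)^2 else 0) := by
      intro x
      by_cases hs : Summable (fun k : ℤ => if Q.k ≤ k then (MDk n k h x)^2 else 0)
      · exact le_of_eq (ENNReal.ofReal_tsum_of_nonneg (hterm x) hs)
      · rw [hF]
        dsimp only
        rw [tsum_eq_zero_of_not_summable hs, ENNReal.ofReal_zero]
        exact zero_le
    have step2 : ∫⁻ x in Q.set, ENNReal.ofReal (F x)
        ≤ ∑' k : ℤ, ∫⁻ x in Q.set, ENNReal.ofReal (if Q.k ≤ k then (MDk n k h x)^2 else 0) := by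
      calc ∫⁻ x in Q.set, ENNReal.ofReal (F x)
          ≤ ∫⁻ x in Q.set, ∑' k : ℤ,
              ENNReal.ofReal (if Q.k ≤ k then (MDk n k h x)^2 else 0) :=
            lintegral_mono step1
        _ = ∑' k : ℤ, ∫⁻ x in Q.set,
              ENNReal.ofReal (if Q.k ≤ k then (MDk n k h x)^2 else 0) :=
            lintegral_tsum fun k => (hmeas k).aemeasurable
    refine le_trans step2 ?_
    set g : ℤ → ENNReal := fun k =>
      ∫⁻ x in Q.set, ENNReal.ofReal (if Q.k ≤ k then (MDk n k h x)^2 else 0) with hg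
    have hg0 : ∀ k, k < Q.k → g k = 0 := by
      intro k hk
      rw [hg]
      simp only [if_neg (not_le.2 hk), ENNReal.ofReal_zero, lintegral_const, zero_mul]
    have e2 : ∀ j : ℕ, g (Q.k + (j:ℤ))
        = ENNReal.ofReal (∫ x in Q.set, (MDk n (Q.k + (j:ℤ)) h x)^2) := by
      intro j
      have hp : Q.k ≤ Q.k + (j:ℤ) := by omega
      rw [hg]
      simp only [if_pos hp]
      rw [← MeasureTheory.ofReal_integral_eq_lintegral_ofReal ((S4.intMD hh j Q).1)
        (Filter.Eventually.of_forall fun x => sq_nonneg _)]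
    have hgK : ∀ s : Finset ℤ, ∑ k ∈ s, g k ≤ ENNReal.ofReal (cc * V) := by
      intro s
      set K : ℕ := (s.sup fun k => (k - Q.k).toNat) + 1 with hK
      have hsub : s.filter (fun k => Q.k ≤ k) ⊆ (Finset.range K).image (fun j : ℕ => Q.k + j) := by
        intro k hk
        obtain ⟨hk1, hk2⟩ := Finset.mem_filter.1 hk
        refine Finset.mem_image.2 ⟨(k - Q.k).toNat, Finset.mem_range.2 ?_, by omega⟩
        exact Nat.lt_succ_of_le (Finset.le_sup (f := fun k => (k - Q.k).toNat) hk1)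
      have e1 : ∑ k ∈ s.filter (fun k => Q.k ≤ k), g k = ∑ k ∈ s, g k := by
        apply Finset.sum_filter_of_ne
        intro k hk hne
        by_contra hlt
        exact hne (hg0 k (not_le.1 hlt))
      rw [← e1]
      calc ∑ k ∈ s.filter (fun k => Q.k ≤ k), g k
          ≤ ∑ k ∈ (Finset.range K).image (fun j : ℕ => Q.k + j), g k :=
            Finset.sum_le_sum_of_subset hsub
        _ = ∑ j ∈ Finset.range K, g (Q.k + (j:ℤ)) :=
            Finset.sum_image (fun a _ b _ hab => by omega)
        _ = ∑ j ∈ Finset.range K, ENNReal.ofReal (∫ x in Q.set, (MDk n (Q.k + (j:ℤ)) h x)^2) :=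
            Finset.sum_congr rfl fun j _ => e2 j
        _ = ENNReal.ofReal (∑ j ∈ Finset.range K, ∫ x in Q.set, (MDk n (Q.k + (j:ℤ)) h x)^2) :=
            (ENNReal.ofReal_sum_of_nonneg fun j _ =>
              setIntegral_nonneg (S4.measurableSet_set Q) fun x _ => sq_nonneg _).symm
        _ ≤ ENNReal.ofReal (cc * V) := by
            apply ENNReal.ofReal_le_ofReal
            rw [Finset.sum_congr rfl (fun j _ => (S4.intMD hh j Q).2), ← S4.Gsum_eq_sum_lev]
            exact S4.Gsum_main hh hN0 hbmo K Q
    rw [ENNReal.tsum_eq_iSup_sum]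
    exact iSup_le hgK
  have hI : ∫ x in Q.set, F x ≤ cc * V := by
    by_cases hInt : Integrable F (volume.restrict Q.set)
    · have h0 : 0 ≤ᵐ[volume.restrict Q.set] F := Filter.Eventually.of_forall hFnonneg
      have heq := MeasureTheory.ofReal_integral_eq_lintegral_ofReal hInt h0
      have hle : ENNReal.ofReal (∫ x in Q.set, F x) ≤ ENNReal.ofReal (cc * V) := by
        rw [heq]; exact hL
      exact (ENNReal.ofReal_le_ofReal_iff hccV0).1 hle
    · rw [MeasureTheory.integral_undef hInt]
      exact hccV0
  rw [avgOn, S4.vol_toReal Q]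
  calc V⁻¹ * ∫ x in Q.set, F x ≤ V⁻¹ * (cc * V) :=
        mul_le_mul_of_nonneg_left hI (inv_nonneg.2 hV.le)
    _ = cc := by field_simp
    _ ≤ C * N^2 := hccC
end
end
end
end
end
end
end

section
/- Let b be dyadically pseudo-accretive (b ∈ L^∞, |E_k b| ≥ δ for all k). Define A_k^b f = b E_k f / E_k b and D_k^b = A_{k+1}^b − A_k^b. Then Σ_k ‖D_k^b f‖₂² ≤ C ‖f‖₂² for all f ∈ L²(ℝⁿ), with C = C(δ, ‖b‖_∞, n). -/
open MeasureTheory Set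
open scoped Classical

namespace S6
noncomputable section

open MeasureTheory Set

variable {n : ℕ}

/-- floor vector -/
def fv (n : ℕ) (k : ℤ) (x : Fin n → ℝ) : Fin n → ℤ := fun i => ⌊(2:ℝ) ^ k * x i⌋

/-- dyadic cube of generation k indexed by m -/
def cb (n : ℕ) (k : ℤ) (m : Fin n → ℤ) : Set (Fin n → ℝ) :=
  {x | ∀ i, ⌊(2:ℝ) ^ k * x i⌋ = m i}

lemma dyadicPiece_eq (k : ℤ) (x : Fin n → ℝ) :
    dyadicPiece n k x = cb n k (fv n k x) := rfl

lemma Ek_eq (k : ℤ) (f : (Fin n → ℝ) → ℝ) (x : Fin n → ℝ) :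
    Ek n k f x = (2:ℝ) ^ (k * (n:ℤ)) * ∫ y in cb n k (fv n k x), f y := rfl

lemma mem_cb {k : ℤ} {m : Fin n → ℤ} {x : Fin n → ℝ} :
    x ∈ cb n k m ↔ fv n k x = m := by
  simp only [cb, mem_setOf_eq, funext_iff]; rfl

lemma mem_cb_self (k : ℤ) (x : Fin n → ℝ) : x ∈ cb n k (fv n k x) := mem_cb.2 rfl

lemma two_zpow_pos (k : ℤ) : (0:ℝ) < (2:ℝ) ^ k := by positivity

lemma cb_eq_pi (k : ℤ) (m : Fin n → ℤ) :
    cb n k m = Set.pi univ (fun i => Ico ((m i : ℝ) / 2 ^ k) (((m i : ℝ) + 1) / 2 ^ k)) := by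
  ext x
  simp only [cb, mem_setOf_eq, Set.mem_pi, mem_univ, forall_true_left, mem_Ico]
  refine forall_congr' fun i => ?_
  rw [Int.floor_eq_iff, div_le_iff₀ (two_zpow_pos k), lt_div_iff₀ (two_zpow_pos k)]
  constructor <;> intro h <;> constructor <;> linarith [h.1, h.2]

lemma measurableSet_cb (k : ℤ) (m : Fin n → ℤ) : MeasurableSet (cb n k m) := by
  rw [cb_eq_pi]
  exact MeasurableSet.univ_pi fun i => measurableSet_Ico

lemma volume_cb (k : ℤ) (m : Fin n → ℤ) :
    volume (cb n k m) = ENNReal.ofReal ((2:ℝ) ^ (-(k * (n:ℤ)))) := by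
  rw [cb_eq_pi, volume_pi_pi]
  have h : ∀ i : Fin n, volume (Ico ((m i : ℝ) / 2 ^ k) (((m i : ℝ) + 1) / 2 ^ k))
      = ENNReal.ofReal ((2:ℝ) ^ (-k)) := by
    intro i
    rw [Real.volume_Ico, zpow_neg, div_sub_div_same, add_sub_cancel_left, one_div]
  simp only [h, Finset.prod_const, Finset.card_univ, Fintype.card_fin]
  rw [← ENNReal.ofReal_pow (by positivity), ← zpow_natCast ((2:ℝ)^(-k)), ← zpow_mul]
  ring_nf

lemma volume_cb_toReal (k : ℤ) (m : Fin n → ℤ) :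
    (volume (cb n k m)).toReal = (2:ℝ) ^ (-(k * (n:ℤ))) := by
  rw [volume_cb, ENNReal.toReal_ofReal (by positivity)]

lemma volume_cb_ne_top (k : ℤ) (m : Fin n → ℤ) : volume (cb n k m) ≠ ⊤ := by
  rw [volume_cb]; exact ENNReal.ofReal_ne_top

lemma two_zpow_mul_volume (k : ℤ) (m : Fin n → ℤ) :
    (2:ℝ) ^ (k * (n:ℤ)) * (volume (cb n k m)).toReal = 1 := by
  rw [volume_cb_toReal, ← zpow_add₀ (two_ne_zero), add_neg_cancel, zpow_zero]

lemma pairwise_disjoint_cb (k : ℤ) :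
    Pairwise (Function.onFun Disjoint fun m : Fin n → ℤ => cb n k m) := by
  intro m m' hmm
  simp only [Function.onFun, Set.disjoint_left]
  intro x hx hx'
  exact hmm ((mem_cb.1 hx).symm.trans (mem_cb.1 hx'))

lemma iUnion_cb (k : ℤ) : (⋃ m : Fin n → ℤ, cb n k m) = univ := by
  ext x; simp only [mem_iUnion, mem_univ, iff_true]
  exact ⟨fv n k x, mem_cb_self k x⟩

end
end S6
namespace S6
noncomputable section

open MeasureTheory Set

variable {n : ℕ}

lemma floor_div_int_floor (a : ℝ) (c : ℕ) (hc : 0 < c) :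
    ⌊a / (c:ℝ)⌋ = ⌊((⌊a⌋ : ℝ)) / (c:ℝ)⌋ := by
  have hc' : (0:ℝ) < (c:ℝ) := by exact_mod_cast hc
  set q := ⌊((⌊a⌋ : ℝ)) / (c:ℝ)⌋ with hq
  have h1 : (q:ℝ) ≤ ((⌊a⌋ : ℝ)) / (c:ℝ) := Int.floor_le _
  have h2 : ((⌊a⌋ : ℝ)) / (c:ℝ) < q + 1 := Int.lt_floor_add_one _
  have hfl : (⌊a⌋ : ℝ) ≤ a := Int.floor_le a
  have hfl2 : a < ⌊a⌋ + 1 := Int.lt_floor_add_one a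
  have h1' : (q:ℝ) * c ≤ (⌊a⌋ : ℝ) := (le_div_iff₀ hc').1 h1
  have h2' : (⌊a⌋ : ℝ) < (q + 1) * c := by
    rw [div_lt_iff₀ hc'] at h2; linarith
  have h2'' : (⌊a⌋ : ℤ) < (q + 1) * c := by exact_mod_cast h2'
  have h2''' : ((⌊a⌋ : ℤ) + 1 : ℝ) ≤ ((q + 1) * c : ℝ) := by exact_mod_cast h2''
  rw [Int.floor_eq_iff]
  constructor
  · rw [le_div_iff₀ hc']; linarith
  · rw [div_lt_iff₀ hc']; push_cast; push_cast at h2'''; linarith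

lemma fv_of_fv {j j' : ℤ} (h : j ≤ j') {x y : Fin n → ℝ}
    (hxy : fv n j' y = fv n j' x) : fv n j y = fv n j x := by
  funext i
  set d : ℕ := (j' - j).toNat with hd
  have hdd : (d : ℤ) = j' - j := Int.toNat_of_nonneg (by omega)
  have hc : (0:ℕ) < 2 ^ d := pow_pos (by norm_num) d
  have key : ∀ z : Fin n → ℝ, (2:ℝ) ^ j * z i = ((2:ℝ) ^ j' * z i) / ((2 ^ d : ℕ) : ℝ) := by
    intro z
    have : (2:ℝ) ^ j' = (2:ℝ) ^ j * ((2 ^ d : ℕ) : ℝ) := by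
      push_cast
      rw [← zpow_natCast (2:ℝ) d, ← zpow_add₀ (two_ne_zero), hdd]
      ring_nf
    rw [this]; field_simp
  have hy := congrFun hxy i
  simp only [fv] at hy ⊢
  rw [key y, key x, floor_div_int_floor _ _ hc, floor_div_int_floor ((2:ℝ)^j' * x i) _ hc]
  rw [hy]

/-- `S` is a union of generation-`j'` dyadic pieces. -/
def Sat (n : ℕ) (j' : ℤ) (S : Set (Fin n → ℝ)) : Prop :=
  ∀ x ∈ S, cb n j' (fv n j' x) ⊆ S

lemma sat_univ (j' : ℤ) : Sat n j' univ := fun _ _ _ _ => mem_univ _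

lemma sat_cb {j j' : ℤ} (h : j ≤ j') (m : Fin n → ℤ) : Sat n j' (cb n j m) := by
  intro x hx y hy
  have : fv n j y = fv n j x := fv_of_fv h (mem_cb.1 hy)
  rw [mem_cb, this, mem_cb.1 hx]

lemma sat_iUnion {j' : ℤ} {S : Set (Fin n → ℝ)} (hS : Sat n j' S) :
    (⋃ t : {m' : Fin n → ℤ // cb n j' m' ⊆ S}, cb n j' t.1) = S := by
  apply subset_antisymm
  · exact iUnion_subset fun t => t.2
  · intro x hx
    exact mem_iUnion.2 ⟨⟨fv n j' x, hS x hx⟩, mem_cb_self j' x⟩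

lemma sat_hasSum {j' : ℤ} {S : Set (Fin n → ℝ)} (hS : Sat n j' S)
    {h : (Fin n → ℝ) → ℝ} (hh : IntegrableOn h S volume) :
    HasSum (fun t : {m' : Fin n → ℤ // cb n j' m' ⊆ S} => ∫ x in cb n j' t.1, h x)
      (∫ x in S, h x) := by
  have := hasSum_integral_iUnion (μ := volume) (f := h)
    (s := fun t : {m' : Fin n → ℤ // cb n j' m' ⊆ S} => cb n j' t.1)
    (fun t => measurableSet_cb j' t.1)
    (fun t t' htt => ((pairwise_disjoint_cb j') (fun he => htt (Subtype.ext he))))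
    (by rw [sat_iUnion hS]; exact hh)
  rwa [sat_iUnion hS] at this

lemma global_hasSum {k : ℤ} {h : (Fin n → ℝ) → ℝ} (hh : Integrable h volume) :
    HasSum (fun m : Fin n → ℤ => ∫ x in cb n k m, h x) (∫ x, h x) := by
  have := hasSum_integral_iUnion (μ := volume) (f := h)
    (s := fun m : Fin n → ℤ => cb n k m)
    (fun m => measurableSet_cb k m)
    (fun m m' hmm => ((pairwise_disjoint_cb k) hmm))
    (by rw [iUnion_cb]; exact hh.integrableOn)
  rwa [iUnion_cb, setIntegral_univ] at this

lemma Ek_const_on {k : ℤ} {m : Fin n → ℤ} {x : Fin n → ℝ} (hx : x ∈ cb n k m)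
    (f : (Fin n → ℝ) → ℝ) :
    Ek n k f x = (2:ℝ) ^ (k * (n:ℤ)) * ∫ y in cb n k m, f y := by
  rw [Ek_eq, mem_cb.1 hx]

lemma measurable_fv (k : ℤ) : Measurable (fv n k) :=
  measurable_pi_lambda _ fun i =>
    Int.measurable_floor.comp ((measurable_pi_apply i).const_mul _)

lemma measurable_Ek (k : ℤ) (f : (Fin n → ℝ) → ℝ) : Measurable (Ek n k f) := by
  have : Ek n k f = (fun m : Fin n → ℤ => (2:ℝ) ^ (k * (n:ℤ)) * ∫ y in cb n k m, f y)
      ∘ (fv n k) := by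
    funext x; rfl
  rw [this]
  exact (measurable_of_countable _).comp (measurable_fv k)

lemma setIntegral_Ek (k : ℤ) (m : Fin n → ℤ) (f : (Fin n → ℝ) → ℝ) :
    ∫ x in cb n k m, Ek n k f x = ∫ y in cb n k m, f y := by
  rw [setIntegral_congr_fun (measurableSet_cb k m)
    (g := fun _ => (2:ℝ) ^ (k * (n:ℤ)) * ∫ y in cb n k m, f y)
    (fun x hx => Ek_const_on hx f)]
  rw [setIntegral_const, smul_eq_mul, measureReal_def, ← mul_assoc, mul_comm ((volume (cb n k m)).toReal),
    two_zpow_mul_volume, one_mul]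

lemma sat_integral_Ek {j j' : ℤ} (hj : j ≤ j') {S : Set (Fin n → ℝ)} (hS : Sat n j' S)
    {h : (Fin n → ℝ) → ℝ} (hh : IntegrableOn h S volume)
    (hE : IntegrableOn (Ek n j' h) S volume) :
    ∫ x in S, Ek n j' h x = ∫ x in S, h x := by
  have h1 := sat_hasSum hS hh
  have h2 := sat_hasSum hS hE
  have : (fun t : {m' : Fin n → ℤ // cb n j' m' ⊆ S} => ∫ x in cb n j' t.1, Ek n j' h x)
      = fun t => ∫ x in cb n j' t.1, h x := by
    funext t; exact setIntegral_Ek j' t.1 h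
  rw [this] at h2
  exact h2.unique h1

lemma integrableOn_cb_of_sq {h : (Fin n → ℝ) → ℝ} (hmeas : AEStronglyMeasurable h volume)
    (hsq : Integrable (fun x => h x ^ 2) volume) (k : ℤ) (m : Fin n → ℤ) :
    IntegrableOn h (cb n k m) volume := by
  apply Integrable.mono' (g := fun x => (h x ^ 2 + 1) / 2)
  · exact ((hsq.integrableOn).add (integrableOn_const (volume_cb_ne_top k m))).div_const 2
  · exact hmeas.restrict
  · filter_upwards with x
    rw [Real.norm_eq_abs]
    nlinarith [sq_nonneg (|h x| - 1), sq_abs (h x)]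

end
end S6
namespace S6
noncomputable section

open MeasureTheory Set

variable {n : ℕ}

lemma two_zpow_kn_pos (k : ℤ) : (0:ℝ) < (2:ℝ) ^ (k * (n:ℤ)) := two_zpow_pos _

lemma Ek_nonneg {g : (Fin n → ℝ) → ℝ} (hg : ∀ y, 0 ≤ g y) (k : ℤ) (x : Fin n → ℝ) :
    0 ≤ Ek n k g x :=
  mul_nonneg (le_of_lt (two_zpow_kn_pos k)) (integral_nonneg fun y => hg y)

/-- everywhere bound for `Ek` of an a.e. bounded function -/
lemma abs_Ek_le_of_ae_bound {g : (Fin n → ℝ) → ℝ} {M : ℝ}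
    (hb : ∀ᵐ y : Fin n → ℝ ∂volume, |g y| ≤ M) (k : ℤ) (x : Fin n → ℝ) :
    |Ek n k g x| ≤ M := by
  rw [Ek_eq, abs_mul, abs_of_pos (two_zpow_kn_pos (n := n) k)]
  have hM : 0 ≤ M := by
    rcases hb.exists with ⟨y, hy⟩; exact le_trans (abs_nonneg _) hy
  have hnorm : ‖∫ y in cb n k (fv n k x), g y‖ ≤ M * (volume (cb n k (fv n k x))).toReal := by
    apply norm_setIntegral_le_of_norm_le_const_ae
      (lt_of_le_of_ne le_top (volume_cb_ne_top _ _))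
    exact (ae_restrict_of_ae (hb.mono fun y hy => by rwa [Real.norm_eq_abs]))
  rw [Real.norm_eq_abs] at hnorm
  calc (2:ℝ) ^ (k * (n:ℤ)) * |∫ y in cb n k (fv n k x), g y|
      ≤ (2:ℝ) ^ (k * (n:ℤ)) * (M * (volume (cb n k (fv n k x))).toReal) := by
        exact mul_le_mul_of_nonneg_left hnorm (le_of_lt (two_zpow_kn_pos k))
    _ = M := by
        rw [mul_comm M, ← mul_assoc, two_zpow_mul_volume, one_mul]

lemma abs_Ek_le_Ek_abs {g : (Fin n → ℝ) → ℝ} (k : ℤ) (x : Fin n → ℝ) :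
    |Ek n k g x| ≤ Ek n k (fun y => |g y|) x := by
  rw [Ek_eq, Ek_eq, abs_mul, abs_of_pos (two_zpow_kn_pos (n := n) k)]
  apply mul_le_mul_of_nonneg_left _ (le_of_lt (two_zpow_kn_pos k))
  calc |∫ y in cb n k (fv n k x), g y| ≤ ∫ y in cb n k (fv n k x), |g y| := by
        simpa [Real.norm_eq_abs] using
          norm_integral_le_integral_norm (μ := volume.restrict (cb n k (fv n k x))) g
    _ = _ := rfl

/-- Cauchy–Schwarz on a dyadic cube. -/
lemma sq_setIntegral_cb_le {g : (Fin n → ℝ) → ℝ} {k : ℤ} {m : Fin n → ℤ}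
    (h1 : IntegrableOn g (cb n k m) volume)
    (h2 : IntegrableOn (fun x => g x ^ 2) (cb n k m) volume) :
    (∫ x in cb n k m, g x) ^ 2 ≤ (volume (cb n k m)).toReal * ∫ x in cb n k m, g x ^ 2 := by
  set V : ℝ := (volume (cb n k m)).toReal with hV
  have hVpos : 0 < V := by
    rw [hV, volume_cb_toReal]; positivity
  set c : ℝ := (∫ x in cb n k m, g x) / V with hc
  have hconst : IntegrableOn (fun _ : Fin n → ℝ => c ^ 2) (cb n k m) volume :=
    integrableOn_const (volume_cb_ne_top k m)
  have hcg : IntegrableOn (fun x => 2 * c * g x) (cb n k m) volume := h1.const_mul _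
  have key : 0 ≤ ∫ x in cb n k m, (g x - c) ^ 2 :=
    integral_nonneg fun x => sq_nonneg _
  have step1 : ∫ x in cb n k m, (g x - c) ^ 2
      = ∫ x in cb n k m, (g x ^ 2 - 2 * c * g x + c ^ 2) := by
    congr 1; funext x; ring
  have hsub : IntegrableOn (fun x => g x ^ 2 - 2 * c * g x) (cb n k m) volume := h2.sub hcg
  rw [step1, integral_add hsub hconst, integral_sub h2 hcg, setIntegral_const] at key
  have step2 : ∫ x in cb n k m, 2 * c * g x = 2 * c * ∫ x in cb n k m, g x :=
    integral_const_mul (2 * c) g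
  rw [step2] at key
  simp only [smul_eq_mul, measureReal_def] at key
  have hc' : c * V = ∫ x in cb n k m, g x := by
    rw [hc]; field_simp
  nlinarith [sq_nonneg (∫ x in cb n k m, g x), hVpos, key, hc']

lemma Ek_sq_le {g : (Fin n → ℝ) → ℝ} (hg : AEStronglyMeasurable g volume)
    (hg2 : Integrable (fun x => g x ^ 2) volume) (k : ℤ) (x : Fin n → ℝ) :
    (Ek n k g x) ^ 2 ≤ Ek n k (fun y => g y ^ 2) x := by
  rw [Ek_eq, Ek_eq, mul_pow]
  set m := fv n k x
  have hcs := sq_setIntegral_cb_le (integrableOn_cb_of_sq hg hg2 k m) (hg2.integrableOn)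
  have hP : (0:ℝ) < (2:ℝ) ^ (k * (n:ℤ)) := two_zpow_kn_pos k
  have hPV := two_zpow_mul_volume (n := n) k m
  set V : ℝ := (volume (cb n k m)).toReal
  set I : ℝ := ∫ y in cb n k m, g y
  set J : ℝ := ∫ y in cb n k m, g y ^ 2
  calc ((2:ℝ) ^ (k * (n:ℤ))) ^ 2 * I ^ 2
      ≤ ((2:ℝ) ^ (k * (n:ℤ))) ^ 2 * (V * J) := by nlinarith
    _ = (2:ℝ) ^ (k * (n:ℤ)) * J := by
        rw [sq]; rw [mul_assoc, ← mul_assoc ((2:ℝ) ^ (k * (n:ℤ))) V J, hPV, one_mul]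

lemma integrable_Ek_sq_comp {g : (Fin n → ℝ) → ℝ}
    (hg2 : Integrable (fun x => g x ^ 2) volume) (k : ℤ) :
    Integrable (Ek n k (fun y => g y ^ 2)) volume := by
  set F := Ek n k (fun y => g y ^ 2) with hF
  have hFmeas : Measurable F := measurable_Ek k _
  have hFnonneg : ∀ x, 0 ≤ F x := Ek_nonneg (fun y => sq_nonneg _) k
  refine ⟨hFmeas.aestronglyMeasurable, ?_⟩
  rw [MeasureTheory.hasFiniteIntegral_iff_norm]
  have hdecomp : ∫⁻ x, ENNReal.ofReal ‖F x‖ ∂volume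
      = ∑' m : Fin n → ℤ, ∫⁻ x in cb n k m, ENNReal.ofReal ‖F x‖ ∂volume := by
    rw [← lintegral_iUnion (fun m => measurableSet_cb k m) (pairwise_disjoint_cb k), iUnion_cb,
      Measure.restrict_univ]
  rw [hdecomp]
  have hsummand : ∀ m : Fin n → ℤ, ∫⁻ x in cb n k m, ENNReal.ofReal ‖F x‖ ∂volume
      = ENNReal.ofReal (∫ y in cb n k m, g y ^ 2) := by
    intro m
    have hcongr : ∫⁻ x in cb n k m, ENNReal.ofReal ‖F x‖ ∂volume
        = ∫⁻ _ in cb n k m,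
            ENNReal.ofReal ‖(2:ℝ) ^ (k * (n:ℤ)) * ∫ y in cb n k m, g y ^ 2‖ ∂volume := by
      apply setLIntegral_congr_fun (measurableSet_cb k m)
      intro x hx
      simp only [hF, Ek_const_on hx]
    rw [hcongr, setLIntegral_const, Real.norm_eq_abs, abs_of_nonneg
      (mul_nonneg (le_of_lt (two_zpow_kn_pos k)) (integral_nonneg fun y => sq_nonneg _)),
      volume_cb, ← ENNReal.ofReal_mul
      (mul_nonneg (le_of_lt (two_zpow_kn_pos k)) (integral_nonneg fun y => sq_nonneg _))]
    congr 1
    rw [mul_comm ((2:ℝ) ^ (k * (n:ℤ)))]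
    rw [mul_assoc]
    rw [← zpow_add₀ (two_ne_zero : (2:ℝ) ≠ 0), add_neg_cancel, zpow_zero, mul_one]
  simp only [hsummand]
  have hsum := global_hasSum (k := k) hg2
  rw [← ENNReal.ofReal_tsum_of_nonneg (fun m => integral_nonneg fun y => sq_nonneg _)
    hsum.summable]
  exact ENNReal.ofReal_lt_top

lemma integral_Ek_sq_comp {g : (Fin n → ℝ) → ℝ}
    (hg2 : Integrable (fun x => g x ^ 2) volume) (k : ℤ) :
    ∫ x, Ek n k (fun y => g y ^ 2) x = ∫ x, g x ^ 2 := by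
  have h1 := global_hasSum (k := k) (integrable_Ek_sq_comp hg2 k)
  have h2 := global_hasSum (k := k) hg2
  have : (fun m : Fin n → ℤ => ∫ x in cb n k m, Ek n k (fun y => g y ^ 2) x)
      = fun m : Fin n → ℤ => ∫ x in cb n k m, g x ^ 2 := by
    funext m; exact setIntegral_Ek k m _
  rw [this] at h1
  exact h1.unique h2

lemma integrable_Ek_sq {g : (Fin n → ℝ) → ℝ} (hg : AEStronglyMeasurable g volume)
    (hg2 : Integrable (fun x => g x ^ 2) volume) (k : ℤ) :
    Integrable (fun x => (Ek n k g x) ^ 2) volume := by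
  apply Integrable.mono' (integrable_Ek_sq_comp hg2 k)
    (((measurable_Ek k g).pow_const 2).aestronglyMeasurable)
  filter_upwards with x
  rw [Real.norm_eq_abs, abs_of_nonneg (sq_nonneg _)]
  exact Ek_sq_le hg hg2 k x

lemma integral_Ek_sq_le {g : (Fin n → ℝ) → ℝ} (hg : AEStronglyMeasurable g volume)
    (hg2 : Integrable (fun x => g x ^ 2) volume) (k : ℤ) :
    ∫ x, (Ek n k g x) ^ 2 ≤ ∫ x, g x ^ 2 := by
  rw [← integral_Ek_sq_comp hg2 k]
  exact integral_mono (integrable_Ek_sq hg hg2 k) (integrable_Ek_sq_comp hg2 k)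
    (fun x => Ek_sq_le hg hg2 k x)

lemma integrableOn_Ek_cb {g : (Fin n → ℝ) → ℝ} (hg : AEStronglyMeasurable g volume)
    (hg2 : Integrable (fun x => g x ^ 2) volume) (k j : ℤ) (m : Fin n → ℤ) :
    IntegrableOn (Ek n k g) (cb n j m) volume :=
  integrableOn_cb_of_sq (measurable_Ek k g).aestronglyMeasurable (integrable_Ek_sq hg hg2 k) j m

end
end S6
namespace S6
noncomputable section

open MeasureTheory Set

variable {n : ℕ}

lemma vol_cb_lt_top (k : ℤ) (m : Fin n → ℤ) : volume (cb n k m) < ⊤ :=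
  lt_of_le_of_ne le_top (volume_cb_ne_top k m)

lemma integrableOn_cb_of_ae_bound {h : (Fin n → ℝ) → ℝ} {M : ℝ}
    (hmeas : AEStronglyMeasurable h volume)
    (hb : ∀ᵐ y : Fin n → ℝ ∂volume, |h y| ≤ M) (k : ℤ) (m : Fin n → ℤ) :
    IntegrableOn h (cb n k m) volume := by
  apply Measure.integrableOn_of_bounded (volume_cb_ne_top k m) hmeas
  exact ae_restrict_of_ae (hb.mono fun y hy => by rwa [Real.norm_eq_abs])

lemma abs_MDk_le_of_ae_bound {h : (Fin n → ℝ) → ℝ} {M : ℝ}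
    (hb : ∀ᵐ y : Fin n → ℝ ∂volume, |h y| ≤ M) (k : ℤ) (x : Fin n → ℝ) :
    |MDk n k h x| ≤ 2 * M := by
  have h1 := abs_Ek_le_of_ae_bound hb (k+1) x
  have h2 := abs_Ek_le_of_ae_bound hb k x
  calc |MDk n k h x| = |Ek n (k+1) h x - Ek n k h x| := rfl
    _ ≤ |Ek n (k+1) h x| + |Ek n k h x| := abs_sub _ _
    _ ≤ 2 * M := by linarith

lemma sat_integral_Ek_mul_MD {k : ℤ} {S : Set (Fin n → ℝ)} (hS : Sat n k S)
    {h : (Fin n → ℝ) → ℝ}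
    (hcb : ∀ m : Fin n → ℤ, IntegrableOn h (cb n k m) volume)
    (hEk : ∀ m : Fin n → ℤ, IntegrableOn (Ek n k h) (cb n k m) volume)
    (hEk1 : ∀ m : Fin n → ℤ, IntegrableOn (Ek n (k+1) h) (cb n k m) volume)
    (hint : IntegrableOn (fun x => Ek n k h x * MDk n k h x) S volume) :
    ∫ x in S, Ek n k h x * MDk n k h x = 0 := by
  have hsum := sat_hasSum hS hint
  have hzero : ∀ t : {m' : Fin n → ℤ // cb n k m' ⊆ S},
      ∫ x in cb n k t.1, Ek n k h x * MDk n k h x = 0 := by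
    intro t
    set m := t.1
    set c : ℝ := (2:ℝ) ^ (k * (n:ℤ)) * ∫ y in cb n k m, h y with hc
    have hcongr : ∫ x in cb n k m, Ek n k h x * MDk n k h x
        = ∫ x in cb n k m, c * MDk n k h x := by
      apply setIntegral_congr_fun (measurableSet_cb k m)
      intro x hx
      show Ek n k h x * MDk n k h x = c * MDk n k h x
      rw [Ek_const_on hx h]
    have hMDint : IntegrableOn (MDk n k h) (cb n k m) volume := by
      have := (hEk1 m).sub (hEk m)
      exact this
    have hMD : ∫ x in cb n k m, MDk n k h x = 0 := by
      have hsplit : ∫ x in cb n k m, MDk n k h x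
          = (∫ x in cb n k m, Ek n (k+1) h x) - ∫ x in cb n k m, Ek n k h x :=
        integral_sub (hEk1 m) (hEk m)
      have h1 : ∫ x in cb n k m, Ek n (k+1) h x = ∫ x in cb n k m, h x :=
        sat_integral_Ek (le_of_lt (lt_add_one k)) (sat_cb (le_of_lt (lt_add_one k)) m)
          (hcb m) (hEk1 m)
      have h2 : ∫ x in cb n k m, Ek n k h x = ∫ x in cb n k m, h x := setIntegral_Ek k m h
      rw [hsplit, h1, h2, sub_self]
    rw [hcongr, integral_const_mul, hMD, mul_zero]
  simp only [hzero] at hsum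
  exact (hasSum_zero.unique hsum).symm

lemma MDk_sq_expand (k : ℤ) (g : (Fin n → ℝ) → ℝ) (x : Fin n → ℝ) :
    (Ek n (k+1) g x) ^ 2
      = (Ek n k g x) ^ 2 + 2 * (Ek n k g x * MDk n k g x) + (MDk n k g x) ^ 2 := by
  simp only [MDk]; ring

lemma integrable_MDk_sq {g : (Fin n → ℝ) → ℝ} (hg : AEStronglyMeasurable g volume)
    (hg2 : Integrable (fun x => g x ^ 2) volume) (k : ℤ) :
    Integrable (fun x => (MDk n k g x) ^ 2) volume := by
  apply Integrable.mono'
    (((integrable_Ek_sq hg hg2 (k+1)).const_mul 2).add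
      ((integrable_Ek_sq hg hg2 k).const_mul 2))
  · exact ((((measurable_Ek (k+1) g).sub (measurable_Ek k g)).pow_const 2)).aestronglyMeasurable
  · filter_upwards with x
    simp only [Pi.add_apply]
    rw [Real.norm_eq_abs, abs_of_nonneg (sq_nonneg _)]
    simp only [MDk]
    nlinarith [sq_nonneg (Ek n (k+1) g x + Ek n k g x)]

lemma integrable_Ek_mul_MDk {g : (Fin n → ℝ) → ℝ} (hg : AEStronglyMeasurable g volume)
    (hg2 : Integrable (fun x => g x ^ 2) volume) (k : ℤ) :
    Integrable (fun x => Ek n k g x * MDk n k g x) volume := by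
  apply Integrable.mono'
    (((integrable_Ek_sq hg hg2 k).add (integrable_MDk_sq hg hg2 k)).div_const 2)
  · exact ((measurable_Ek k g).mul
      ((measurable_Ek (k+1) g).sub (measurable_Ek k g))).aestronglyMeasurable
  · filter_upwards with x
    simp only [Pi.add_apply]
    rw [Real.norm_eq_abs, abs_mul]
    nlinarith [sq_nonneg (|Ek n k g x| - |MDk n k g x|), abs_nonneg (Ek n k g x),
      abs_nonneg (MDk n k g x), sq_abs (Ek n k g x), sq_abs (MDk n k g x)]

/-- Global Pythagoras. -/
lemma integral_MDk_sq {g : (Fin n → ℝ) → ℝ} (hg : AEStronglyMeasurable g volume)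
    (hg2 : Integrable (fun x => g x ^ 2) volume) (k : ℤ) :
    ∫ x, (Ek n (k+1) g x) ^ 2
      = (∫ x, (Ek n k g x) ^ 2) + ∫ x, (MDk n k g x) ^ 2 := by
  have hcross : ∫ x, Ek n k g x * MDk n k g x = 0 := by
    have := sat_integral_Ek_mul_MD (sat_univ k)
      (fun m => integrableOn_cb_of_sq hg hg2 k m)
      (fun m => integrableOn_Ek_cb hg hg2 k k m)
      (fun m => integrableOn_Ek_cb hg hg2 (k+1) k m)
      ((integrable_Ek_mul_MDk hg hg2 k).integrableOn)
    rwa [setIntegral_univ] at this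
  have e1 : ∫ x, (Ek n (k+1) g x) ^ 2
      = ∫ x, ((Ek n k g x) ^ 2 + 2 * (Ek n k g x * MDk n k g x) + (MDk n k g x) ^ 2) := by
    congr 1; funext x; exact MDk_sq_expand k g x
  have i1 : Integrable (fun x => (Ek n k g x) ^ 2 + 2 * (Ek n k g x * MDk n k g x)) volume :=
    (integrable_Ek_sq hg hg2 k).add ((integrable_Ek_mul_MDk hg hg2 k).const_mul 2)
  rw [e1, integral_add i1 (integrable_MDk_sq hg hg2 k),
    integral_add (integrable_Ek_sq hg hg2 k) ((integrable_Ek_mul_MDk hg hg2 k).const_mul 2),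
    integral_const_mul, hcross, mul_zero, add_zero]

/-- Square-function bound for martingale differences on a window. -/
lemma sum_integral_MDk_sq_le {g : (Fin n → ℝ) → ℝ} (hg : AEStronglyMeasurable g volume)
    (hg2 : Integrable (fun x => g x ^ 2) volume) (a : ℤ) (N : ℕ) :
    ∑ t ∈ Finset.range N, ∫ x, (MDk n (a + t) g x) ^ 2 ≤ ∫ x, g x ^ 2 := by
  have key : ∀ N' : ℕ, ∑ t ∈ Finset.range N', ∫ x, (MDk n (a + t) g x) ^ 2
      = (∫ x, (Ek n (a + N') g x) ^ 2) - ∫ x, (Ek n a g x) ^ 2 := by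
    intro N'
    induction N' with
    | zero => simp only [Finset.range_zero, Finset.sum_empty, Nat.cast_zero, add_zero, sub_self]
    | succ N' ih =>
      rw [Finset.sum_range_succ, ih]
      have := integral_MDk_sq hg hg2 (a + N')
      have hcast : (a + (N' + 1 : ℕ) : ℤ) = (a + N') + 1 := by push_cast; ring
      rw [hcast, this]
      ring
  rw [key N]
  have h1 : ∫ x, (Ek n (a + N) g x) ^ 2 ≤ ∫ x, g x ^ 2 := integral_Ek_sq_le hg hg2 _
  have h2 : 0 ≤ ∫ x, (Ek n a g x) ^ 2 := integral_nonneg fun x => sq_nonneg _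
  linarith

/-- Local Pythagoras for a bounded function on a dyadic cube. -/
lemma setIntegral_MDk_sq_bounded {h : (Fin n → ℝ) → ℝ} {M : ℝ}
    (hmeas : Measurable h) (hb : ∀ᵐ y : Fin n → ℝ ∂volume, |h y| ≤ M)
    {j k : ℤ} (hjk : j ≤ k) (m : Fin n → ℤ) :
    ∫ x in cb n j m, (Ek n (k+1) h x) ^ 2
      = (∫ x in cb n j m, (Ek n k h x) ^ 2) + ∫ x in cb n j m, (MDk n k h x) ^ 2 := by
  have hMnn : 0 ≤ M := by rcases hb.exists with ⟨y, hy⟩; exact le_trans (abs_nonneg _) hy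
  have hEb : ∀ (k' : ℤ) (x : Fin n → ℝ), |Ek n k' h x| ≤ M :=
    fun k' x => abs_Ek_le_of_ae_bound hb k' x
  have hEbd : ∀ (k' j' : ℤ) (m' : Fin n → ℤ), IntegrableOn (Ek n k' h) (cb n j' m') volume :=
    fun k' j' m' => integrableOn_cb_of_ae_bound (measurable_Ek k' h).aestronglyMeasurable
      (Filter.Eventually.of_forall (hEb k')) j' m'
  have hEsq : ∀ (k' j' : ℤ) (m' : Fin n → ℤ),
      IntegrableOn (fun x => (Ek n k' h x) ^ 2) (cb n j' m') volume := by
    intro k' j' m'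
    apply integrableOn_cb_of_ae_bound (((measurable_Ek k' h).pow_const 2).aestronglyMeasurable)
      (M := M ^ 2)
    filter_upwards with x
    rw [abs_of_nonneg (sq_nonneg _)]
    nlinarith [hEb k' x, abs_nonneg (Ek n k' h x), sq_abs (Ek n k' h x)]
  have hMDsq : IntegrableOn (fun x => (MDk n k h x) ^ 2) (cb n j m) volume := by
    apply integrableOn_cb_of_ae_bound
      ((((measurable_Ek (k+1) h).sub (measurable_Ek k h)).pow_const 2)).aestronglyMeasurable
      (M := (2*M) ^ 2)
    filter_upwards with x
    rw [abs_of_nonneg (sq_nonneg _)]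
    have h2 : |Ek n (k+1) h x - Ek n k h x| ≤ 2 * M := abs_MDk_le_of_ae_bound hb k x
    show (Ek n (k+1) h x - Ek n k h x) ^ 2 ≤ (2*M) ^ 2
    nlinarith [abs_nonneg (Ek n (k+1) h x - Ek n k h x), sq_abs (Ek n (k+1) h x - Ek n k h x)]
  have hcrossint : IntegrableOn (fun x => Ek n k h x * MDk n k h x) (cb n j m) volume := by
    apply integrableOn_cb_of_ae_bound
      (((measurable_Ek k h).mul ((measurable_Ek (k+1) h).sub (measurable_Ek k h))).aestronglyMeasurable)
      (M := M * (2*M))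
    filter_upwards with x
    show |Ek n k h x * (Ek n (k+1) h x - Ek n k h x)| ≤ M * (2 * M)
    rw [abs_mul]
    have h1 := hEb k x
    have h2 := abs_MDk_le_of_ae_bound hb k x
    exact mul_le_mul h1 h2 (abs_nonneg _) hMnn
  have hcross : ∫ x in cb n j m, Ek n k h x * MDk n k h x = 0 :=
    sat_integral_Ek_mul_MD (sat_cb hjk m)
      (fun m' => integrableOn_cb_of_ae_bound hmeas.aestronglyMeasurable hb k m')
      (fun m' => hEbd k k m') (fun m' => hEbd (k+1) k m') hcrossint
  have e1 : ∫ x in cb n j m, (Ek n (k+1) h x) ^ 2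
      = ∫ x in cb n j m, ((Ek n k h x) ^ 2 + 2 * (Ek n k h x * MDk n k h x)
          + (MDk n k h x) ^ 2) := by
    congr 1; funext x; exact MDk_sq_expand k h x
  have i1 : IntegrableOn (fun x => (Ek n k h x) ^ 2 + 2 * (Ek n k h x * MDk n k h x))
      (cb n j m) volume := (hEsq k j m).add (hcrossint.const_mul 2)
  rw [e1, integral_add i1 hMDsq, integral_add (hEsq k j m) (hcrossint.const_mul 2),
    integral_const_mul, hcross, mul_zero, add_zero]

/-- Local Carleson packing bound on a dyadic cube. -/
lemma carleson_cb {h : (Fin n → ℝ) → ℝ} {M : ℝ}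
    (hmeas : Measurable h) (hb : ∀ᵐ y : Fin n → ℝ ∂volume, |h y| ≤ M)
    (j : ℤ) (m : Fin n → ℤ) (N : ℕ) :
    ∑ s ∈ Finset.range N, ∫ x in cb n j m, (MDk n (j + s) h x) ^ 2
      ≤ M ^ 2 * (volume (cb n j m)).toReal := by
  have hMnn : 0 ≤ M := by rcases hb.exists with ⟨y, hy⟩; exact le_trans (abs_nonneg _) hy
  have hEb : ∀ (k' : ℤ) (x : Fin n → ℝ), |Ek n k' h x| ≤ M :=
    fun k' x => abs_Ek_le_of_ae_bound hb k' x
  have hEsq : ∀ (k' : ℤ),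
      IntegrableOn (fun x => (Ek n k' h x) ^ 2) (cb n j m) volume := by
    intro k'
    apply integrableOn_cb_of_ae_bound (((measurable_Ek k' h).pow_const 2).aestronglyMeasurable)
      (M := M ^ 2)
    filter_upwards with x
    rw [abs_of_nonneg (sq_nonneg _)]
    nlinarith [hEb k' x, abs_nonneg (Ek n k' h x), sq_abs (Ek n k' h x)]
  have key : ∀ N' : ℕ, ∑ s ∈ Finset.range N', ∫ x in cb n j m, (MDk n (j + s) h x) ^ 2
      = (∫ x in cb n j m, (Ek n (j + N') h x) ^ 2)
        - ∫ x in cb n j m, (Ek n j h x) ^ 2 := by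
    intro N'
    induction N' with
    | zero => simp only [Finset.range_zero, Finset.sum_empty, Nat.cast_zero, add_zero, sub_self]
    | succ N' ih =>
      rw [Finset.sum_range_succ, ih]
      have hthis := setIntegral_MDk_sq_bounded hmeas hb (j := j) (k := j + N')
        (by omega) m
      have hcast : (j + (N' + 1 : ℕ) : ℤ) = (j + N') + 1 := by push_cast; ring
      rw [hcast, hthis]
      ring
  rw [key N]
  have h1 : ∫ x in cb n j m, (Ek n (j + N) h x) ^ 2 ≤ M ^ 2 * (volume (cb n j m)).toReal := by
    calc ∫ x in cb n j m, (Ek n (j + N) h x) ^ 2 ≤ ∫ _ in cb n j m, M ^ 2 := by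
          apply integral_mono (hEsq (j + N))
            (integrableOn_const (vol_cb_lt_top j m).ne)
          intro x
          show Ek n (j + N) h x ^ 2 ≤ M ^ 2
          nlinarith [hEb (j + N) x, abs_nonneg (Ek n (j + N) h x), sq_abs (Ek n (j + N) h x)]
      _ = M ^ 2 * (volume (cb n j m)).toReal := by
          rw [setIntegral_const, smul_eq_mul, measureReal_def, mul_comm]
  have h2 : 0 ≤ ∫ x in cb n j m, (Ek n j h x) ^ 2 := integral_nonneg fun x => sq_nonneg _
  linarith

end
end S6
namespace S6
noncomputable section

open MeasureTheory Set

variable {n : ℕ}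

/-- The Bellman auxiliary weight `α_j^{(r)} = M⁻² Σ_{s<r} E_j((Δ_{j+s}b)²)`. -/
def alphaF (n : ℕ) (b : (Fin n → ℝ) → ℝ) (M : ℝ) (j : ℤ) (r : ℕ) : (Fin n → ℝ) → ℝ :=
  fun x => (M ^ 2)⁻¹ * ∑ s ∈ Finset.range r, Ek n j (fun y => (MDk n (j + s) b y) ^ 2) x

/-- value of `alphaF` on the cube `cb n j m` -/
def Acube (n : ℕ) (b : (Fin n → ℝ) → ℝ) (M : ℝ) (j : ℤ) (r : ℕ) (m : Fin n → ℤ) : ℝ :=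
  (M ^ 2)⁻¹ * ∑ s ∈ Finset.range r,
    ((2:ℝ) ^ (j * (n:ℤ)) * ∫ y in cb n j m, (MDk n (j + s) b y) ^ 2)

section carleson

variable {b : (Fin n → ℝ) → ℝ} {M : ℝ}
variable (hbm : Measurable b) (hbM : ∀ᵐ y : Fin n → ℝ ∂volume, |b y| ≤ M)

include hbM in
lemma MDb_sq_bound (k : ℤ) (y : Fin n → ℝ) : |(MDk n k b y) ^ 2| ≤ 4 * M ^ 2 := by
  have h := abs_MDk_le_of_ae_bound hbM k y
  rw [abs_of_nonneg (sq_nonneg _)]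
  nlinarith [abs_nonneg (MDk n k b y), sq_abs (MDk n k b y)]

omit hbm hbM in
lemma measurable_MDb_sq (k : ℤ) : Measurable (fun y => (MDk n k b y) ^ 2) :=
  ((measurable_Ek (k+1) b).sub (measurable_Ek k b)).pow_const 2

include hbm hbM in
lemma int_MDb_sq_cb (k j : ℤ) (m : Fin n → ℤ) :
    IntegrableOn (fun y => (MDk n k b y) ^ 2) (cb n j m) volume :=
  integrableOn_cb_of_ae_bound (measurable_MDb_sq k).aestronglyMeasurable
    (Filter.Eventually.of_forall (MDb_sq_bound hbM k)) j m

include hbM in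
lemma Ek_MDb_sq_bound (j k : ℤ) (x : Fin n → ℝ) :
    |Ek n j (fun y => (MDk n k b y) ^ 2) x| ≤ 4 * M ^ 2 :=
  abs_Ek_le_of_ae_bound (Filter.Eventually.of_forall (MDb_sq_bound hbM k)) j x

lemma measurable_alpha (j : ℤ) (r : ℕ) : Measurable (alphaF n b M j r) := by
  apply Measurable.const_mul
  exact Finset.measurable_sum _ (fun s _ => measurable_Ek j _)

lemma alpha_nonneg (j : ℤ) (r : ℕ) (x : Fin n → ℝ) : 0 ≤ alphaF n b M j r x := by
  apply mul_nonneg (by positivity)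
  exact Finset.sum_nonneg fun s _ => Ek_nonneg (fun y => sq_nonneg _) j x

lemma alpha_const_on {j : ℤ} {r : ℕ} {m : Fin n → ℤ} {x : Fin n → ℝ} (hx : x ∈ cb n j m) :
    alphaF n b M j r x = Acube n b M j r m := by
  unfold alphaF Acube
  congr 1
  exact Finset.sum_congr rfl fun s _ => Ek_const_on hx _

include hbm hbM in
lemma alpha_le_one (hM : 0 < M) (j : ℤ) (r : ℕ) (x : Fin n → ℝ) :
    alphaF n b M j r x ≤ 1 := by
  unfold alphaF
  have hsum : ∑ s ∈ Finset.range r, Ek n j (fun y => (MDk n (j + s) b y) ^ 2) x ≤ M ^ 2 := by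
    have he : ∀ s : ℕ, Ek n j (fun y => (MDk n (j + s) b y) ^ 2) x
        = (2:ℝ) ^ (j * (n:ℤ)) * ∫ y in cb n j (fv n j x), (MDk n (j + s) b y) ^ 2 :=
      fun s => Ek_eq j _ x
    calc ∑ s ∈ Finset.range r, Ek n j (fun y => (MDk n (j + s) b y) ^ 2) x
        = (2:ℝ) ^ (j * (n:ℤ)) *
            ∑ s ∈ Finset.range r, ∫ y in cb n j (fv n j x), (MDk n (j + s) b y) ^ 2 := by
          rw [Finset.mul_sum]
          exact Finset.sum_congr rfl fun s _ => he s
      _ ≤ (2:ℝ) ^ (j * (n:ℤ)) * (M ^ 2 * (volume (cb n j (fv n j x))).toReal) := by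
          apply mul_le_mul_of_nonneg_left _ (le_of_lt (two_zpow_kn_pos j))
          exact carleson_cb hbm hbM j (fv n j x) r
      _ = M ^ 2 := by
          rw [mul_comm (M ^ 2), ← mul_assoc, two_zpow_mul_volume, one_mul]
  calc (M ^ 2)⁻¹ * ∑ s ∈ Finset.range r, Ek n j (fun y => (MDk n (j + s) b y) ^ 2) x
      ≤ (M ^ 2)⁻¹ * M ^ 2 := by
        apply mul_le_mul_of_nonneg_left hsum (by positivity)
    _ = 1 := by field_simp

lemma cb_nonempty (j : ℤ) (m : Fin n → ℤ) : ((fun i => (m i : ℝ) / 2 ^ j) ∈ cb n j m) := by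
  intro i
  have : (2:ℝ) ^ j * ((m i : ℝ) / 2 ^ j) = (m i : ℝ) := by
    field_simp
  rw [this, Int.floor_intCast]

lemma Acube_nonneg (j : ℤ) (r : ℕ) (m : Fin n → ℤ) : 0 ≤ Acube n b M j r m := by
  rw [← alpha_const_on (cb_nonempty j m)]
  exact alpha_nonneg j r _

include hbm hbM in
lemma Acube_le_one (hM : 0 < M) (j : ℤ) (r : ℕ) (m : Fin n → ℤ) : Acube n b M j r m ≤ 1 := by
  rw [← alpha_const_on (cb_nonempty j m)]
  exact alpha_le_one hbm hbM hM j r _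

end carleson

end
end S6
namespace S6
noncomputable section

open MeasureTheory Set

variable {n : ℕ}

lemma vol_cb_pos (j : ℤ) (m : Fin n → ℤ) : 0 < (volume (cb n j m)).toReal := by
  rw [volume_cb_toReal]; positivity

/-- weighted Cauchy–Schwarz on a dyadic cube -/
lemma weighted_CS_cb {u w : (Fin n → ℝ) → ℝ} {j : ℤ} {m : Fin n → ℤ}
    (hu : IntegrableOn u (cb n j m) volume)
    (hw : IntegrableOn w (cb n j m) volume)
    (huw : IntegrableOn (fun x => u x ^ 2 / w x) (cb n j m) volume)
    (hw1 : ∀ x, 1 ≤ w x) :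
    (∫ x in cb n j m, u x) ^ 2
      ≤ (∫ x in cb n j m, w x) * ∫ x in cb n j m, u x ^ 2 / w x := by
  have hWpos : 0 < ∫ x in cb n j m, w x := by
    have h1 : (volume (cb n j m)).toReal = ∫ _ in cb n j m, (1:ℝ) := by
      rw [setIntegral_const, smul_eq_mul, mul_one, measureReal_def]
    have h2 : ∫ _ in cb n j m, (1:ℝ) ≤ ∫ x in cb n j m, w x :=
      integral_mono (integrableOn_const (vol_cb_lt_top j m).ne) hw hw1
    linarith [vol_cb_pos j m]
  set θ : ℝ := (∫ x in cb n j m, u x) / (∫ x in cb n j m, w x) with hθ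
  have key : 0 ≤ ∫ x in cb n j m, (u x - θ * w x) ^ 2 / w x :=
    integral_nonneg fun x => div_nonneg (sq_nonneg _) (le_trans zero_le_one (hw1 x))
  have expand : ∫ x in cb n j m, (u x - θ * w x) ^ 2 / w x
      = ∫ x in cb n j m, (u x ^ 2 / w x - 2 * θ * u x + θ ^ 2 * w x) := by
    congr 1; funext x
    have hwx : w x ≠ 0 := by linarith [hw1 x]
    field_simp
    ring
  have hsub : IntegrableOn (fun x => u x ^ 2 / w x - 2 * θ * u x) (cb n j m) volume :=
    huw.sub (hu.const_mul _)
  rw [expand, integral_add hsub (hw.const_mul _), integral_sub huw (hu.const_mul _),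
    integral_const_mul, integral_const_mul] at key
  have hθW : θ * ∫ x in cb n j m, w x = ∫ x in cb n j m, u x := by
    rw [hθ]; field_simp
  nlinarith [key, hWpos, hθW]

section carleson

variable {b g : (Fin n → ℝ) → ℝ} {M : ℝ}
variable (hbm : Measurable b) (hbM : ∀ᵐ y : Fin n → ℝ ∂volume, |b y| ≤ M) (hM : 0 < M)
variable (hgnn : ∀ x, 0 ≤ g x) (hg : AEStronglyMeasurable g volume)
  (hg2 : Integrable (fun x => g x ^ 2) volume)

include hbm hbM hM hgnn hg hg2 in
set_option maxHeartbeats 1000000 in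
lemma bellman_cube_step (j : ℤ) (r : ℕ) (m : Fin n → ℤ) :
    (∫ x in cb n j m, (Ek n j g x) ^ 2 / (1 + alphaF n b M j (r+1) x))
      + (4 * M ^ 2)⁻¹ * ∫ x in cb n j m, (Ek n j g x) ^ 2 * (MDk n j b x) ^ 2
      ≤ ∫ x in cb n j m, (Ek n (j+1) g x) ^ 2 / (1 + alphaF n b M (j+1) r x) := by
  set Q := cb n j m with hQ
  set V : ℝ := (volume Q).toReal with hV
  have hVpos : 0 < V := vol_cb_pos j m
  set c : ℝ := (2:ℝ) ^ (j * (n:ℤ)) * ∫ y in Q, g y with hc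
  have hc0 : 0 ≤ c :=
    mul_nonneg (le_of_lt (two_zpow_kn_pos j)) (integral_nonneg fun y => hgnn y)
  set A : ℝ := Acube n b M j (r+1) m with hA
  have hA0 : 0 ≤ A := Acube_nonneg j (r+1) m
  have hA1 : A ≤ 1 := Acube_le_one hbm hbM hM j (r+1) m
  set D : ℝ := ∫ x in Q, (MDk n j b x) ^ 2 with hD
  have hD0 : 0 ≤ D := integral_nonneg fun x => sq_nonneg _
  set e : ℝ := (M ^ 2)⁻¹ * D with he
  have he0 : 0 ≤ e := mul_nonneg (by positivity) hD0
  -- term 1 : constant on Q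
  have term1 : ∫ x in Q, (Ek n j g x) ^ 2 / (1 + alphaF n b M j (r+1) x)
      = V * (c ^ 2 / (1 + A)) := by
    rw [setIntegral_congr_fun (measurableSet_cb j m)
      (g := fun _ => c ^ 2 / (1 + A)) ?_, setIntegral_const, smul_eq_mul, measureReal_def]
    intro x hx
    show (Ek n j g x) ^ 2 / (1 + alphaF n b M j (r+1) x) = c ^ 2 / (1 + A)
    rw [Ek_const_on hx g, alpha_const_on hx]
  -- term 2 : (E_j g)² is constant on Q
  have term2 : ∫ x in Q, (Ek n j g x) ^ 2 * (MDk n j b x) ^ 2 = c ^ 2 * D := by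
    rw [setIntegral_congr_fun (measurableSet_cb j m)
      (g := fun x => c ^ 2 * (MDk n j b x) ^ 2) ?_, integral_const_mul]
    intro x hx
    show (Ek n j g x) ^ 2 * (MDk n j b x) ^ 2 = c ^ 2 * (MDk n j b x) ^ 2
    rw [Ek_const_on hx g]
  -- the weight w = 1 + α_{j+1}^{(r)}
  set w : (Fin n → ℝ) → ℝ := fun x => 1 + alphaF n b M (j+1) r x with hw
  have hw1 : ∀ x, 1 ≤ w x := fun x => le_add_of_nonneg_right (alpha_nonneg (j+1) r x)
  have hw2 : ∀ x, w x ≤ 2 := fun x => by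
    have := alpha_le_one hbm hbM hM (j+1) r x
    simp only [hw]; linarith
  have hwmeas : Measurable w := measurable_const.add (measurable_alpha (j+1) r)
  have hwint : IntegrableOn w Q volume := by
    apply integrableOn_cb_of_ae_bound hwmeas.aestronglyMeasurable (M := 2) _ j m
    filter_upwards with x
    rw [abs_of_nonneg (le_trans zero_le_one (hw1 x))]
    exact hw2 x
  set u : (Fin n → ℝ) → ℝ := Ek n (j+1) g with hu
  have hu0 : ∀ x, 0 ≤ u x := fun x => Ek_nonneg hgnn (j+1) x
  have huint : IntegrableOn u Q volume := integrableOn_Ek_cb hg hg2 (j+1) j m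
  have husq : IntegrableOn (fun x => u x ^ 2) Q volume :=
    (integrable_Ek_sq hg hg2 (j+1)).integrableOn
  have huwint : IntegrableOn (fun x => u x ^ 2 / w x) Q volume := by
    apply Integrable.mono' husq
    · exact (((measurable_Ek (j+1) g).pow_const 2).div hwmeas).aestronglyMeasurable.restrict
    · filter_upwards with x
      rw [Real.norm_eq_abs, abs_of_nonneg (div_nonneg (sq_nonneg _)
        (le_trans zero_le_one (hw1 x)))]
      exact div_le_self (sq_nonneg _) (hw1 x)
  -- I1 : ∫_Q u = V c
  have I1 : ∫ x in Q, u x = V * c := by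
    have h1 : ∫ x in Q, u x = ∫ x in Q, g x :=
      sat_integral_Ek (le_of_lt (lt_add_one j)) (sat_cb (le_of_lt (lt_add_one j)) m)
        (integrableOn_cb_of_sq hg hg2 j m) huint
    rw [h1, hc, ← mul_assoc, mul_comm V, two_zpow_mul_volume, one_mul]
  -- I2 : ∫_Q w = V(1+A) - e
  have I2 : ∫ x in Q, w x = V * (1 + A) - e := by
    have hsplit : ∫ x in Q, w x = V + ∫ x in Q, alphaF n b M (j+1) r x := by
      rw [hw]
      rw [integral_add (integrableOn_const (C := (1:ℝ)) (vol_cb_lt_top j m).ne)]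
      · rw [setIntegral_const, smul_eq_mul, mul_one, measureReal_def]
      · apply integrableOn_cb_of_ae_bound (measurable_alpha (j+1) r).aestronglyMeasurable
          (M := 1)
        filter_upwards with x
        rw [abs_of_nonneg (alpha_nonneg (j+1) r x)]
        exact alpha_le_one hbm hbM hM (j+1) r x
    have halpha : ∫ x in Q, alphaF n b M (j+1) r x
        = (M ^ 2)⁻¹ * ∑ s ∈ Finset.range r, ∫ x in Q, (MDk n (j+1+s) b x) ^ 2 := by
      unfold alphaF
      rw [integral_const_mul]
      congr 1
      rw [integral_finset_sum]
      · apply Finset.sum_congr rfl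
        intro s _
        exact sat_integral_Ek (le_of_lt (lt_add_one j)) (sat_cb (le_of_lt (lt_add_one j)) m)
          (int_MDb_sq_cb hbm hbM (j+1+s) j m)
          (integrableOn_cb_of_ae_bound (measurable_Ek (j+1) _).aestronglyMeasurable
            (Filter.Eventually.of_forall (Ek_MDb_sq_bound hbM (j+1) (j+1+s))) j m)
      · intro s _
        exact integrableOn_cb_of_ae_bound (measurable_Ek (j+1) _).aestronglyMeasurable
          (Filter.Eventually.of_forall (Ek_MDb_sq_bound hbM (j+1) (j+1+s))) j m
    have hVA : V * A = (M ^ 2)⁻¹ * ∑ s ∈ Finset.range (r+1), ∫ x in Q, (MDk n (j+s) b x) ^ 2 := by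
      rw [hA]
      unfold Acube
      rw [Finset.mul_sum, Finset.mul_sum, Finset.mul_sum]
      apply Finset.sum_congr rfl
      intro s _
      rw [← mul_assoc, ← mul_assoc, mul_comm V ((M ^ 2)⁻¹), mul_assoc ((M ^ 2)⁻¹) V,
        mul_comm V, two_zpow_mul_volume, mul_one]
    have hsplitsum : ∑ s ∈ Finset.range (r+1), ∫ x in Q, (MDk n (j+s) b x) ^ 2
        = (∑ s ∈ Finset.range r, ∫ x in Q, (MDk n (j+1+s) b x) ^ 2) + D := by
      rw [Finset.sum_range_succ' (fun s : ℕ => ∫ x in Q, (MDk n (j+s) b x) ^ 2) r]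
      congr 1
      · apply Finset.sum_congr rfl
        intro s _
        norm_num
        rw [show j + ((s:ℤ) + 1) = j + 1 + (s:ℤ) by ring]
      · norm_num [hD]
    rw [hsplit, halpha]
    rw [hsplitsum] at hVA
    rw [mul_add] at hVA
    rw [he]
    linear_combination -hVA
  -- Cauchy–Schwarz
  have CS := weighted_CS_cb huint hwint huwint hw1
  rw [I1, I2] at CS
  set X : ℝ := ∫ x in Q, u x ^ 2 / w x with hX
  -- final elementary inequality
  rw [term1, term2]
  set W : ℝ := V * (1 + A) - e with hW
  have hWge : V ≤ W := by
    have : V ≤ ∫ x in Q, w x := by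
      have h1 : (volume Q).toReal = ∫ _ in Q, (1:ℝ) := by
        rw [setIntegral_const, smul_eq_mul, mul_one, measureReal_def]
      rw [hV, h1]
      exact integral_mono (integrableOn_const (vol_cb_lt_top j m).ne) hwint hw1
    rwa [I2] at this
  have hWpos : 0 < W := lt_of_lt_of_le hVpos hWge
  have hWle : W ≤ V * (1 + A) := by rw [hW]; linarith
  set P : ℝ := 1 + A with hP
  have hP1 : 1 ≤ P := by rw [hP]; linarith
  have hP2 : P ≤ 2 := by rw [hP]; linarith
  have hWP4 : W * P ≤ 4 * V := by nlinarith
  have hWPpos : 0 < W * P := mul_pos hWpos (by linarith)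
  have hXlow : (V * c) ^ 2 ≤ W * X := CS
  -- show V * (c^2 / P) + (4 M²)⁻¹ (c² D) ≤ X
  have hgoal : (V * (c ^ 2 / P) + (4 * M ^ 2)⁻¹ * (c ^ 2 * D)) * (W * P) ≤ X * (W * P) := by
    have hq : (4 * M ^ 2)⁻¹ * (c ^ 2 * D) = c ^ 2 * e / 4 := by
      rw [he, mul_inv]
      ring
    rw [hq]
    have expand : (V * (c ^ 2 / P) + c ^ 2 * e / 4) * (W * P)
        = V * c ^ 2 * W + (c ^ 2 * e / 4) * (W * P) := by
      field_simp
    rw [expand]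
    have key2 : V * c ^ 2 * W + (c ^ 2 * e / 4) * (W * P) ≤ (V * c) ^ 2 * P := by
      have hWdef : W = V * P - e := by rw [hW, hP]
      have hnn : 0 ≤ c ^ 2 * e / 4 := by positivity
      have h5 : (c ^ 2 * e / 4) * (W * P) ≤ V * c ^ 2 * e := by
        calc (c ^ 2 * e / 4) * (W * P) ≤ (c ^ 2 * e / 4) * (4 * V) :=
              mul_le_mul_of_nonneg_left hWP4 hnn
          _ = V * c ^ 2 * e := by ring
      have h6 : V * c ^ 2 * W = V ^ 2 * c ^ 2 * P - V * c ^ 2 * e := by rw [hWdef]; ring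
      have h7 : (V * c) ^ 2 * P = V ^ 2 * c ^ 2 * P := by ring
      linarith [h5, h6, h7]
    calc V * c ^ 2 * W + (c ^ 2 * e / 4) * (W * P) ≤ (V * c) ^ 2 * P := key2
      _ ≤ (W * X) * P := by nlinarith [hXlow, hP1]
      _ = X * (W * P) := by ring
  exact le_of_mul_le_mul_right hgoal hWPpos

end carleson

end
end S6
namespace S6
noncomputable section

open MeasureTheory Set

variable {n : ℕ}

section carleson2

variable {b g : (Fin n → ℝ) → ℝ} {M : ℝ}
variable (hbm : Measurable b) (hbM : ∀ᵐ y : Fin n → ℝ ∂volume, |b y| ≤ M) (hM : 0 < M)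
variable (hgnn : ∀ x, 0 ≤ g x) (hg : AEStronglyMeasurable g volume)
  (hg2 : Integrable (fun x => g x ^ 2) volume)

omit hbm hbM hM hgnn in
include hg hg2 in
lemma integrable_div_alpha (j j' : ℤ) (r : ℕ) :
    Integrable (fun x => (Ek n j g x) ^ 2 / (1 + alphaF n b M j' r x)) volume := by
  apply Integrable.mono' (integrable_Ek_sq hg hg2 j)
  · exact (((measurable_Ek j g).pow_const 2).div
      (measurable_const.add (measurable_alpha j' r))).aestronglyMeasurable
  · filter_upwards with x
    have h1 : (0:ℝ) ≤ 1 + alphaF n b M j' r x :=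
      le_trans zero_le_one (le_add_of_nonneg_right (alpha_nonneg j' r x))
    rw [Real.norm_eq_abs, abs_of_nonneg (div_nonneg (sq_nonneg _) h1)]
    exact div_le_self (sq_nonneg _)
      (le_add_of_nonneg_right (alpha_nonneg j' r x))

omit hbm hM hgnn in
include hbM hg hg2 in
lemma integrable_sq_mul_MDb (j : ℤ) :
    Integrable (fun x => (Ek n j g x) ^ 2 * (MDk n j b x) ^ 2) volume := by
  apply Integrable.mono' ((integrable_Ek_sq hg hg2 j).const_mul (4 * M ^ 2))
  · exact (((measurable_Ek j g).pow_const 2).mul (measurable_MDb_sq j)).aestronglyMeasurable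
  · filter_upwards with x
    rw [Real.norm_eq_abs, abs_of_nonneg (mul_nonneg (sq_nonneg _) (sq_nonneg _))]
    have := MDb_sq_bound hbM j x
    rw [abs_of_nonneg (sq_nonneg _)] at this
    nlinarith [sq_nonneg (Ek n j g x)]

include hbm hbM hM hgnn hg hg2 in
lemma bellman_step (j : ℤ) (r : ℕ) :
    (∫ x, (Ek n j g x) ^ 2 / (1 + alphaF n b M j (r+1) x))
      + (4 * M ^ 2)⁻¹ * ∫ x, (Ek n j g x) ^ 2 * (MDk n j b x) ^ 2
      ≤ ∫ x, (Ek n (j+1) g x) ^ 2 / (1 + alphaF n b M (j+1) r x) := by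
  have hmid := global_hasSum (k := j) (integrable_div_alpha (b := b) (M := M) hg hg2 j j (r+1))
  have hsmall := global_hasSum (k := j) (integrable_sq_mul_MDb hbM hg hg2 j)
  have htop := global_hasSum (k := j) (integrable_div_alpha (b := b) (M := M) hg hg2 (j+1) (j+1) r)
  have hcomb := hmid.add (hsmall.mul_left ((4 * M ^ 2)⁻¹))
  apply hasSum_le _ hcomb htop
  intro m
  exact bellman_cube_step hbm hbM hM hgnn hg hg2 j r m

include hbm hbM hM hgnn hg hg2 in
lemma carleson_embedding (a : ℤ) (N : ℕ) :
    ∑ t ∈ Finset.range N, ∫ x, (Ek n (a + t) g x) ^ 2 * (MDk n (a + t) b x) ^ 2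
      ≤ 4 * M ^ 2 * ∫ x, g x ^ 2 := by
  set Wt : ℕ → ℝ := fun t => ∫ x, (Ek n (a + t) g x) ^ 2 / (1 + alphaF n b M (a + t) (N - t) x)
    with hWt
  have step : ∀ t : ℕ, t < N →
      Wt t + (4 * M ^ 2)⁻¹ * (∫ x, (Ek n (a + t) g x) ^ 2 * (MDk n (a + t) b x) ^ 2)
        ≤ Wt (t+1) := by
    intro t ht
    have h1 := bellman_step hbm hbM hM hgnn hg hg2 (a + t) (N - (t+1))
    have hr : N - (t+1) + 1 = N - t := by omega
    rw [hr] at h1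
    have hcast : (a + ((t+1:ℕ)):ℤ) = (a + t) + 1 := by push_cast; ring
    rw [hWt]
    simp only [hcast]
    exact h1
  have ind : ∀ T : ℕ, T ≤ N →
      Wt 0 + (4 * M ^ 2)⁻¹ *
        ∑ t ∈ Finset.range T, ∫ x, (Ek n (a + t) g x) ^ 2 * (MDk n (a + t) b x) ^ 2
      ≤ Wt T := by
    intro T
    induction T with
    | zero => intro _; simp
    | succ T ih =>
      intro hT
      have h1 := ih (by omega)
      have h2 := step T (by omega)
      rw [Finset.sum_range_succ, mul_add]
      linarith
  have final := ind N le_rfl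
  have hW0 : 0 ≤ Wt 0 := integral_nonneg fun x => div_nonneg (sq_nonneg _)
    (le_trans zero_le_one (le_add_of_nonneg_right (alpha_nonneg _ _ _)))
  have hWN : Wt N ≤ ∫ x, g x ^ 2 := by
    have h1 : Wt N ≤ ∫ x, (Ek n (a + N) g x) ^ 2 := by
      apply integral_mono (integrable_div_alpha (b := b) (M := M) hg hg2 (a + N) (a + N) (N - N))
        (integrable_Ek_sq hg hg2 (a + N))
      intro x
      exact div_le_self (sq_nonneg _) (le_add_of_nonneg_right (alpha_nonneg _ _ _))
    exact le_trans h1 (integral_Ek_sq_le hg hg2 _)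
  have hM4 : (0:ℝ) < 4 * M ^ 2 := by positivity
  have hfin : (4 * M ^ 2)⁻¹ *
      ∑ t ∈ Finset.range N, ∫ x, (Ek n (a + t) g x) ^ 2 * (MDk n (a + t) b x) ^ 2
      ≤ ∫ x, g x ^ 2 := by linarith
  calc ∑ t ∈ Finset.range N, ∫ x, (Ek n (a + t) g x) ^ 2 * (MDk n (a + t) b x) ^ 2
      = (4 * M ^ 2) * ((4 * M ^ 2)⁻¹ *
          ∑ t ∈ Finset.range N, ∫ x, (Ek n (a + t) g x) ^ 2 * (MDk n (a + t) b x) ^ 2) := by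
        rw [← mul_assoc, mul_inv_cancel₀ (ne_of_gt hM4), one_mul]
    _ ≤ 4 * M ^ 2 * ∫ x, g x ^ 2 := by
        apply mul_le_mul_of_nonneg_left hfin (le_of_lt hM4)

end carleson2

end
end S6
namespace S6
noncomputable section

open MeasureTheory Set

variable {n : ℕ}

lemma TD_pointwise {b f : (Fin n → ℝ) → ℝ} {δ M : ℝ} (hδ : 0 < δ) (k : ℤ) (x : Fin n → ℝ)
    (hbx : |b x| ≤ M) (h0 : δ ≤ |Ek n k b x|) (h1 : δ ≤ |Ek n (k+1) b x|)
    (hB0M : |Ek n k b x| ≤ M) :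
    (TDkb n b k f x) ^ 2 ≤ (2*M^4/δ^4) * (MDk n k f x) ^ 2
      + (2*M^2/δ^4) * ((Ek n k f x) ^ 2 * (MDk n k b x) ^ 2) := by
  have hB0 : Ek n k b x ≠ 0 := by
    intro h; rw [h] at h0; simp at h0; linarith
  have hB1 : Ek n (k+1) b x ≠ 0 := by
    intro h; rw [h] at h1; simp at h1; linarith
  have key : TDkb n b k f x
      = b x * (MDk n k f x * Ek n k b x - Ek n k f x * MDk n k b x)
        / (Ek n (k+1) b x * Ek n k b x) := by
    unfold TDkb Akb MDk
    field_simp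
    ring
  rw [key, div_pow, mul_pow]
  have e1 : δ^2 ≤ (Ek n (k+1) b x)^2 := by
    nlinarith [h1, sq_abs (Ek n (k+1) b x), abs_nonneg (Ek n (k+1) b x)]
  have e0 : δ^2 ≤ (Ek n k b x)^2 := by
    nlinarith [h0, sq_abs (Ek n k b x), abs_nonneg (Ek n k b x)]
  have hden : δ^4 ≤ (Ek n (k+1) b x * Ek n k b x)^2 := by
    have h2 : δ^2 * δ^2 ≤ (Ek n (k+1) b x)^2 * (Ek n k b x)^2 :=
      mul_le_mul e1 e0 (by positivity) (by positivity)
    nlinarith [h2]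
  have hb2 : (b x)^2 ≤ M^2 := by
    nlinarith [hbx, sq_abs (b x), abs_nonneg (b x)]
  have hB0sq : (Ek n k b x)^2 ≤ M^2 := by
    nlinarith [hB0M, sq_abs (Ek n k b x), abs_nonneg (Ek n k b x)]
  have hnumsq : (MDk n k f x * Ek n k b x - Ek n k f x * MDk n k b x)^2
      ≤ 2*M^2*(MDk n k f x)^2 + 2*((Ek n k f x)^2 * (MDk n k b x)^2) := by
    nlinarith [sq_nonneg (MDk n k f x * Ek n k b x + Ek n k f x * MDk n k b x),
      mul_le_mul_of_nonneg_left hB0sq (mul_nonneg (le_of_lt two_pos) (sq_nonneg (MDk n k f x))),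
      sq_nonneg (MDk n k f x), sq_nonneg (Ek n k f x * MDk n k b x)]
  have hnum : (b x)^2 * (MDk n k f x * Ek n k b x - Ek n k f x * MDk n k b x)^2
      ≤ M^2 * (2*M^2*(MDk n k f x)^2 + 2*((Ek n k f x)^2 * (MDk n k b x)^2)) := by
    calc (b x)^2 * (MDk n k f x * Ek n k b x - Ek n k f x * MDk n k b x)^2
        ≤ M^2 * (MDk n k f x * Ek n k b x - Ek n k f x * MDk n k b x)^2 :=
          mul_le_mul_of_nonneg_right hb2 (sq_nonneg _)
      _ ≤ M^2 * (2*M^2*(MDk n k f x)^2 + 2*((Ek n k f x)^2 * (MDk n k b x)^2)) :=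
          mul_le_mul_of_nonneg_left hnumsq (sq_nonneg M)
  calc (b x)^2 * (MDk n k f x * Ek n k b x - Ek n k f x * MDk n k b x)^2
        / (Ek n (k+1) b x * Ek n k b x)^2
      ≤ M^2 * (2*M^2*(MDk n k f x)^2 + 2*((Ek n k f x)^2 * (MDk n k b x)^2)) / δ^4 := by
        apply div_le_div₀ (by positivity) hnum (by positivity) hden
    _ = (2*M^4/δ^4) * (MDk n k f x) ^ 2
        + (2*M^2/δ^4) * ((Ek n k f x) ^ 2 * (MDk n k b x) ^ 2) := by
        field_simp

lemma TD_window {b f : (Fin n → ℝ) → ℝ} {δ M : ℝ} (hδ : 0 < δ) (hM : 0 < M)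
    (hbm : Measurable b) (hbM : ∀ᵐ y : Fin n → ℝ ∂volume, |b y| ≤ M)
    (hEb : ∀ k : ℤ, ∀ᵐ x : Fin n → ℝ ∂volume, δ ≤ |Ek n k b x|)
    (hf : MemLp f 2 volume) (a : ℤ) (N : ℕ) :
    ∑ t ∈ Finset.range N, ∫ x, (TDkb n b (a + t) f x) ^ 2
      ≤ (2*M^4/δ^4 + (2*M^2/δ^4) * (4 * M^2)) * ∫ x, f x ^ 2 := by
  have hfa : AEStronglyMeasurable f volume := hf.aestronglyMeasurable
  have hf2 : Integrable (fun x => f x ^ 2) volume := hf.integrable_sq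
  set g : (Fin n → ℝ) → ℝ := fun x => |f x| with hg
  have hgnn : ∀ x, 0 ≤ g x := fun x => abs_nonneg _
  have hga : AEStronglyMeasurable g volume := by
    have := hfa.norm
    simpa [Real.norm_eq_abs] using this
  have hgsq : (fun x => g x ^ 2) = fun x => f x ^ 2 := funext fun x => sq_abs (f x)
  have hg2 : Integrable (fun x => g x ^ 2) volume := by rw [hgsq]; exact hf2
  have perk : ∀ k : ℤ, ∫ x, (TDkb n b k f x) ^ 2
      ≤ (2*M^4/δ^4) * (∫ x, (MDk n k f x) ^ 2)
        + (2*M^2/δ^4) * ∫ x, (Ek n k g x) ^ 2 * (MDk n k b x) ^ 2 := by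
    intro k
    have hae : ∀ᵐ x : Fin n → ℝ ∂volume, (TDkb n b k f x) ^ 2
        ≤ (2*M^4/δ^4) * (MDk n k f x) ^ 2
          + (2*M^2/δ^4) * ((Ek n k g x) ^ 2 * (MDk n k b x) ^ 2) := by
      filter_upwards [hbM, hEb k, hEb (k+1)] with x hx h0 h1
      have hpt := TD_pointwise (f := f) hδ k x hx h0 h1 (abs_Ek_le_of_ae_bound hbM k x)
      have habs : |Ek n k f x| ≤ Ek n k g x := abs_Ek_le_Ek_abs k x
      have hsq : (Ek n k f x) ^ 2 ≤ (Ek n k g x) ^ 2 := by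
        nlinarith [habs, sq_abs (Ek n k f x), abs_nonneg (Ek n k f x)]
      have hc2 : (0:ℝ) ≤ 2*M^2/δ^4 := by positivity
      nlinarith [mul_le_mul_of_nonneg_left
        (mul_le_mul_of_nonneg_right hsq (sq_nonneg (MDk n k b x))) hc2]
    have hint : Integrable (fun x => (2*M^4/δ^4) * (MDk n k f x) ^ 2
        + (2*M^2/δ^4) * ((Ek n k g x) ^ 2 * (MDk n k b x) ^ 2)) volume :=
      ((integrable_MDk_sq hfa hf2 k).const_mul _).add
        ((integrable_sq_mul_MDb hbM hga hg2 k).const_mul _)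
    calc ∫ x, (TDkb n b k f x) ^ 2
        ≤ ∫ x, ((2*M^4/δ^4) * (MDk n k f x) ^ 2
            + (2*M^2/δ^4) * ((Ek n k g x) ^ 2 * (MDk n k b x) ^ 2)) :=
          integral_mono_of_nonneg (Filter.Eventually.of_forall fun x => sq_nonneg _) hint hae
      _ = (2*M^4/δ^4) * (∫ x, (MDk n k f x) ^ 2)
            + (2*M^2/δ^4) * ∫ x, (Ek n k g x) ^ 2 * (MDk n k b x) ^ 2 := by
          rw [integral_add (((integrable_MDk_sq hfa hf2 k)).const_mul _)
            (((integrable_sq_mul_MDb hbM hga hg2 k)).const_mul _),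
            integral_const_mul, integral_const_mul]
  have hsum1 : ∑ t ∈ Finset.range N, ∫ x, (MDk n (a + t) f x) ^ 2 ≤ ∫ x, f x ^ 2 :=
    sum_integral_MDk_sq_le hfa hf2 a N
  have hsum2 : ∑ t ∈ Finset.range N, ∫ x, (Ek n (a + t) g x) ^ 2 * (MDk n (a + t) b x) ^ 2
      ≤ 4 * M ^ 2 * ∫ x, g x ^ 2 :=
    carleson_embedding hbm hbM hM hgnn hga hg2 a N
  rw [hgsq] at hsum2
  have hc1 : (0:ℝ) ≤ 2*M^4/δ^4 := by positivity
  have hc2 : (0:ℝ) ≤ 2*M^2/δ^4 := by positivity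
  calc ∑ t ∈ Finset.range N, ∫ x, (TDkb n b (a + t) f x) ^ 2
      ≤ ∑ t ∈ Finset.range N, ((2*M^4/δ^4) * (∫ x, (MDk n (a + t) f x) ^ 2)
          + (2*M^2/δ^4) * ∫ x, (Ek n (a + t) g x) ^ 2 * (MDk n (a + t) b x) ^ 2) :=
        Finset.sum_le_sum fun t _ => perk (a + t)
    _ = (2*M^4/δ^4) * (∑ t ∈ Finset.range N, ∫ x, (MDk n (a + t) f x) ^ 2)
          + (2*M^2/δ^4) * ∑ t ∈ Finset.range N,
            ∫ x, (Ek n (a + t) g x) ^ 2 * (MDk n (a + t) b x) ^ 2 := by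
        rw [Finset.sum_add_distrib, Finset.mul_sum, Finset.mul_sum]
    _ ≤ (2*M^4/δ^4) * (∫ x, f x ^ 2) + (2*M^2/δ^4) * (4 * M^2 * ∫ x, f x ^ 2) := by
        exact add_le_add (mul_le_mul_of_nonneg_left hsum1 hc1)
          (mul_le_mul_of_nonneg_left hsum2 hc2)
    _ = (2*M^4/δ^4 + (2*M^2/δ^4) * (4 * M^2)) * ∫ x, f x ^ 2 := by ring

end
end S6

/-- square function estimate for the transposed adapted differences
`D_k^b = A_{k+1}^b - A_k^b` (Proposition 8.10). -/
theorem statement6 (n : ℕ) (δ M : ℝ) (hδ : 0 < δ) (hM : 0 ≤ M) :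
    ∃ C : ℝ, 0 < C ∧
      ∀ b : (Fin n → ℝ) → ℝ, Measurable b → (∀ᵐ x : Fin n → ℝ ∂volume, |b x| ≤ M) →
        (∀ k : ℤ, ∀ᵐ x : Fin n → ℝ ∂volume, δ ≤ |Ek n k b x|) →
        ∀ f : (Fin n → ℝ) → ℝ, MemLp f 2 volume →
          ∑' k : ℤ, ∫ x : Fin n → ℝ, (TDkb n b k f x) ^ 2 ≤
            C * ∫ x : Fin n → ℝ, f x ^ 2 := by
  classical
  classical
  set C0 : ℝ := 2*M^4/δ^4 + (2*M^2/δ^4) * (4 * M^2) with hC0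
  have hC0nn : 0 ≤ C0 := by rw [hC0]; positivity
  refine ⟨C0 + 1, by positivity, ?_⟩
  intro b hbm hbM hEb f hf
  have hf2nn : 0 ≤ ∫ x : Fin n → ℝ, f x ^ 2 := integral_nonneg fun x => sq_nonneg _
  rcases eq_or_lt_of_le hM with hM0 | hMpos
  · -- degenerate case M = 0
    have hb0 : ∀ᵐ x : Fin n → ℝ ∂volume, b x = 0 := by
      filter_upwards [hbM] with x hx
      rw [← hM0] at hx
      exact abs_eq_zero.mp (le_antisymm hx (abs_nonneg _))
    have hTD0 : ∀ k : ℤ, (∫ x : Fin n → ℝ, (TDkb n b k f x) ^ 2) = 0 := by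
      intro k
      have hzero : (fun x => (TDkb n b k f x) ^ 2) =ᵐ[volume] (fun _ => (0:ℝ)) := by
        filter_upwards [hb0] with x hx
        unfold TDkb Akb
        rw [hx]
        simp
      rw [integral_congr_ae hzero, integral_zero]
    simp only [hTD0, tsum_zero]
    positivity
  · -- main case M > 0
    set u : ℤ → ℝ := fun k => ∫ x : Fin n → ℝ, (TDkb n b k f x) ^ 2 with hu
    have hunn : ∀ k, 0 ≤ u k := fun k => integral_nonneg fun x => sq_nonneg _
    have hpartial : ∀ F : Finset ℤ, ∑ k ∈ F, u k ≤ C0 * ∫ x : Fin n → ℝ, f x ^ 2 := by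
      intro F
      rcases F.eq_empty_or_nonempty with hF | hF
      · rw [hF, Finset.sum_empty]
        exact mul_nonneg hC0nn hf2nn
      · set a := F.min' hF with ha
        set bb := F.max' hF with hbb
        set N : ℕ := (bb + 1 - a).toNat with hN
        have hsub : F ⊆ (Finset.range N).image (fun t : ℕ => a + (t:ℤ)) := by
          intro k hk
          have h1 : a ≤ k := F.min'_le k hk
          have h2 : k ≤ bb := F.le_max' k hk
          refine Finset.mem_image.2 ⟨(k - a).toNat, Finset.mem_range.2 ?_, ?_⟩
          · omega
          · omega
        calc ∑ k ∈ F, u k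
            ≤ ∑ k ∈ (Finset.range N).image (fun t : ℕ => a + (t:ℤ)), u k :=
              Finset.sum_le_sum_of_subset_of_nonneg hsub (fun k _ _ => hunn k)
          _ = ∑ t ∈ Finset.range N, u (a + (t:ℤ)) :=
              Finset.sum_image (fun x _ y _ h => by omega)
          _ ≤ C0 * ∫ x : Fin n → ℝ, f x ^ 2 :=
              S6.TD_window hδ hMpos hbm hbM hEb hf a N
    have hsummable : Summable u := summable_of_sum_le (fun k => hunn k) hpartial
    have hle : ∑' k : ℤ, u k ≤ C0 * ∫ x : Fin n → ℝ, f x ^ 2 :=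
      Summable.tsum_le_of_sum_le hsummable hpartial
    have : C0 * ∫ x : Fin n → ℝ, f x ^ 2 ≤ (C0 + 1) * ∫ x : Fin n → ℝ, f x ^ 2 := by
      nlinarith [hf2nn]
    exact le_trans hle this
end

section
/- Let Q be a dyadic cube, and let b ∈ L²(Q) with supp b ⊆ Q, [b]_Q = 1, and ‖b‖_{L²(Q)} ≤ C₀|Q|^{1/2}. Then for every f ∈ L²(Q): ‖f‖_{L²(Q)} ≤ C (‖f − [f]_Q‖_{L²(Q)} + |Q|^{-1/2} |⟨f, b⟩|), where C depends only on C₀. -/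
open MeasureTheory Set
open scoped Classical

lemma cube_eq_pi {n : ℕ} (Q : DyadicCube n) :
    Q.set = Set.pi Set.univ
      (fun i => Set.Ico ((Q.m i : ℝ) / 2 ^ Q.k) (((Q.m i : ℝ) + 1) / 2 ^ Q.k)) := by
  ext x
  simp only [DyadicCube.set, Set.mem_setOf_eq, Set.mem_pi, Set.mem_univ, true_implies,
    Set.mem_Ico]
  refine forall_congr' fun i => ?_
  have h2 : (0:ℝ) < 2 ^ Q.k := zpow_pos (by norm_num) _
  rw [div_le_iff₀ h2, lt_div_iff₀ h2, mul_comm (x i) ((2:ℝ) ^ Q.k)]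

lemma cube_meas {n : ℕ} (Q : DyadicCube n) : MeasurableSet Q.set := by
  rw [cube_eq_pi]; exact MeasurableSet.univ_pi fun i => measurableSet_Ico

lemma cube_vol {n : ℕ} (Q : DyadicCube n) :
    volume Q.set = ∏ _i : Fin n, ENNReal.ofReal ((2:ℝ) ^ (-Q.k)) := by
  rw [cube_eq_pi, volume_pi_pi]
  refine Finset.prod_congr rfl fun i _ => ?_
  rw [Real.volume_Ico]
  congr 1
  have h2 : (0:ℝ) < 2 ^ Q.k := zpow_pos (by norm_num) _
  rw [div_sub_div_same, add_sub_cancel_left, zpow_neg, one_div]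

lemma cube_vol_pos {n : ℕ} (Q : DyadicCube n) : 0 < volume Q.set := by
  rw [cube_vol]
  refine CanonicallyOrderedAdd.prod_pos.mpr fun i _ => ?_
  exact ENNReal.ofReal_pos.mpr (zpow_pos (by norm_num) _)

lemma cube_vol_ne_top {n : ℕ} (Q : DyadicCube n) : volume Q.set ≠ ⊤ := by
  rw [cube_vol]
  exact (ENNReal.prod_lt_top fun i _ => ENNReal.ofReal_lt_top).ne

/-- Lemma 8.35. -/
theorem statement10 (C₀ : ℝ) (hC₀ : 0 < C₀) :
    ∃ C : ℝ, 0 < C ∧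
      ∀ (n : ℕ) (Q : DyadicCube n) (b f : (Fin n → ℝ) → ℝ),
        MemLp b 2 (volume.restrict Q.set) → MemLp f 2 (volume.restrict Q.set) →
        (∀ x ∉ Q.set, b x = 0) →
        avgOn n Q.set b = 1 →
        Real.sqrt (∫ x in Q.set, b x ^ 2) ≤ C₀ * Real.sqrt (volume Q.set).toReal →
        Real.sqrt (∫ x in Q.set, f x ^ 2) ≤
          C * (Real.sqrt (∫ x in Q.set, (f x - avgOn n Q.set f) ^ 2) +
            (Real.sqrt (volume Q.set).toReal)⁻¹ * |∫ x in Q.set, f x * b x|) := by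
  refine ⟨1 + C₀, by linarith, ?_⟩
  intro n Q b f hb hf _hbsupp havg hbnorm
  have hVpos : 0 < (volume Q.set).toReal :=
    ENNReal.toReal_pos (cube_vol_pos Q).ne' (cube_vol_ne_top Q)
  set V := (volume Q.set).toReal with hVdef
  haveI : IsFiniteMeasure (volume.restrict Q.set) :=
    ⟨by rw [Measure.restrict_apply_univ]; exact (cube_vol_ne_top Q).lt_top⟩
  set c := avgOn n Q.set f with hc
  set s := Real.sqrt V with hs
  have hspos : 0 < s := Real.sqrt_pos.mpr hVpos
  have hss : s * s = V := Real.mul_self_sqrt hVpos.le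
  -- membership / integrability facts
  have hg : MemLp (fun x => f x - c) 2 (volume.restrict Q.set) := hf.sub (memLp_const c)
  have hfi : Integrable f (volume.restrict Q.set) := hf.integrable one_le_two
  have hbi : Integrable b (volume.restrict Q.set) := hb.integrable one_le_two
  have hgi : Integrable (fun x => f x - c) (volume.restrict Q.set) := hg.integrable one_le_two
  have hfb : Integrable (fun x => f x * b x) (volume.restrict Q.set) := by
    have := memLp_one_iff_integrable.mp
      (hb.smul (r := 1) hf)
    exact this
  have hgb : Integrable (fun x => (f x - c) * b x) (volume.restrict Q.set) := by
    have := memLp_one_iff_integrable.mp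
      (hb.smul (r := 1) hg)
    exact this
  have hsqg : Integrable (fun x => (f x - c) ^ 2) (volume.restrict Q.set) := hg.integrable_sq
  -- notation for the main quantities
  set A := Real.sqrt (∫ x in Q.set, (f x - c) ^ 2) with hA
  set B := Real.sqrt (∫ x in Q.set, b x ^ 2) with hB
  set I := |∫ x in Q.set, f x * b x| with hI
  have hAnn : 0 ≤ A := Real.sqrt_nonneg _
  have hInn : 0 ≤ I := abs_nonneg _
  have hIgnn : 0 ≤ ∫ x in Q.set, (f x - c) ^ 2 := integral_nonneg fun x => sq_nonneg _
  have hIbnn : 0 ≤ ∫ x in Q.set, b x ^ 2 := integral_nonneg fun x => sq_nonneg _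
  have hA2 : A ^ 2 = ∫ x in Q.set, (f x - c) ^ 2 := Real.sq_sqrt hIgnn
  -- basic integral identities
  have hintf : ∫ x in Q.set, f x = c * V := by
    have h : c = V⁻¹ * ∫ x in Q.set, f x := hc
    field_simp at h
    linarith
  have hintb : ∫ x in Q.set, b x = V := by
    have h := havg
    rw [avgOn, ← hVdef] at h
    field_simp at h
    linarith
  have hintg : ∫ x in Q.set, (f x - c) = 0 := by
    rw [integral_sub hfi (integrable_const c), setIntegral_const, smul_eq_mul, hintf, measureReal_def, ← hVdef]
    ring
  -- ∫ f² = ∫ g² + c² V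
  have hIf : ∫ x in Q.set, f x ^ 2 = (∫ x in Q.set, (f x - c) ^ 2) + c ^ 2 * V := by
    have h1 : ∀ x, f x ^ 2 = (f x - c) ^ 2 + ((2 * c) * (f x - c) + c ^ 2) := by
      intro x; ring
    have h2 : Integrable (fun x => (2 * c) * (f x - c)) (volume.restrict Q.set) :=
      hgi.const_mul (2 * c)
    have h3 : Integrable (fun x => (2 * c) * (f x - c) + c ^ 2) (volume.restrict Q.set) :=
      h2.add (integrable_const _)
    rw [integral_congr_ae (Filter.Eventually.of_forall h1),
      integral_add hsqg h3, integral_add h2 (integrable_const _),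
      integral_const_mul, hintg, setIntegral_const, smul_eq_mul, measureReal_def, ← hVdef]
    ring
  -- ∫ f b = ∫ g b + c V
  have hfb_split : ∫ x in Q.set, f x * b x = (∫ x in Q.set, (f x - c) * b x) + c * V := by
    have h1 : ∀ x, f x * b x = (f x - c) * b x + c * b x := by intro x; ring
    rw [integral_congr_ae (Filter.Eventually.of_forall h1),
      integral_add hgb (hbi.const_mul c), integral_const_mul, hintb]
  -- Cauchy–Schwarz
  have hCS : |∫ x in Q.set, (f x - c) * b x| ≤ A * B := by
    have habs : |∫ x in Q.set, (f x - c) * b x| ≤ ∫ x in Q.set, |f x - c| * |b x| := by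
      simpa [Real.norm_eq_abs, abs_mul] using
        norm_integral_le_integral_norm (μ := volume.restrict Q.set)
          (fun x => (f x - c) * b x)
    refine habs.trans ?_
    have hpq : Real.HolderConjugate 2 2 := Real.HolderConjugate.two_two
    have hg2 : MemLp (fun x => f x - c) (ENNReal.ofReal (2:ℝ)) (volume.restrict Q.set) := by
      simpa [show ENNReal.ofReal (2:ℝ) = 2 by norm_num] using hg
    have hb2 : MemLp b (ENNReal.ofReal (2:ℝ)) (volume.restrict Q.set) := by
      simpa [show ENNReal.ofReal (2:ℝ) = 2 by norm_num] using hb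
    have := MeasureTheory.integral_mul_norm_le_Lp_mul_Lq hpq hg2 hb2
    simp only [Real.norm_eq_abs] at this
    refine this.trans_eq ?_
    have e1 : ∫ x in Q.set, |f x - c| ^ (2:ℝ) = ∫ x in Q.set, (f x - c) ^ 2 := by
      refine integral_congr_ae (Filter.Eventually.of_forall fun x => ?_)
      simp [Real.rpow_two, sq_abs]
    have e2 : ∫ x in Q.set, |b x| ^ (2:ℝ) = ∫ x in Q.set, b x ^ 2 := by
      refine integral_congr_ae (Filter.Eventually.of_forall fun x => ?_)
      simp [Real.rpow_two, sq_abs]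
    rw [e1, e2, hA, hB, Real.sqrt_eq_rpow, Real.sqrt_eq_rpow]
  -- |c| V ≤ I + C₀ A s
  have hBle : B ≤ C₀ * s := hbnorm
  have hBnn : 0 ≤ B := Real.sqrt_nonneg _
  have hcV : |c| * V ≤ I + C₀ * A * s := by
    have h1 : c * V = (∫ x in Q.set, f x * b x) - ∫ x in Q.set, (f x - c) * b x := by
      rw [hfb_split]; ring
    have h2 : |c * V| ≤ I + |∫ x in Q.set, (f x - c) * b x| := by
      rw [h1]; exact (abs_sub _ _)
    have h3 : |∫ x in Q.set, (f x - c) * b x| ≤ C₀ * A * s := by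
      calc |∫ x in Q.set, (f x - c) * b x| ≤ A * B := hCS
        _ ≤ A * (C₀ * s) := by
            exact mul_le_mul_of_nonneg_left hBle hAnn
        _ = C₀ * A * s := by ring
    calc |c| * V = |c * V| := by rw [abs_mul, abs_of_nonneg hVpos.le]
      _ ≤ I + |∫ x in Q.set, (f x - c) * b x| := h2
      _ ≤ I + C₀ * A * s := by linarith
  -- step 1 : √(∫f²) ≤ A + |c| s
  have step1 : Real.sqrt (∫ x in Q.set, f x ^ 2) ≤ A + |c| * s := by
    rw [hIf]
    have hle : (∫ x in Q.set, (f x - c) ^ 2) + c ^ 2 * V ≤ (A + |c| * s) ^ 2 := by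
      have hcs : |c| ^ 2 = c ^ 2 := sq_abs c
      nlinarith [mul_nonneg (mul_nonneg hAnn (abs_nonneg c)) hspos.le]
    calc Real.sqrt ((∫ x in Q.set, (f x - c) ^ 2) + c ^ 2 * V)
        ≤ Real.sqrt ((A + |c| * s) ^ 2) := Real.sqrt_le_sqrt hle
      _ = A + |c| * s := Real.sqrt_sq (by positivity)
  -- step 2 : |c| s ≤ s⁻¹ I + C₀ A
  have step2 : |c| * s ≤ s⁻¹ * I + C₀ * A := by
    have h1 : |c| * s ≤ (I + C₀ * A * s) / s := by
      rw [le_div_iff₀ hspos]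
      calc |c| * s * s = |c| * V := by rw [mul_assoc, hss]
        _ ≤ I + C₀ * A * s := hcV
    have h2 : (I + C₀ * A * s) / s = s⁻¹ * I + C₀ * A := by
      rw [add_div, mul_div_assoc, div_self hspos.ne', mul_one, div_eq_inv_mul]
    rw [h2] at h1
    exact h1
  -- conclude
  have hfinal : Real.sqrt (∫ x in Q.set, f x ^ 2) ≤ (1 + C₀) * A + s⁻¹ * I := by
    calc Real.sqrt (∫ x in Q.set, f x ^ 2) ≤ A + |c| * s := step1
      _ ≤ A + (s⁻¹ * I + C₀ * A) := by linarith
      _ = (1 + C₀) * A + s⁻¹ * I := by ring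
  calc Real.sqrt (∫ x in Q.set, f x ^ 2) ≤ (1 + C₀) * A + s⁻¹ * I := hfinal
    _ ≤ (1 + C₀) * A + (1 + C₀) * (s⁻¹ * I) := by
        have : s⁻¹ * I ≤ (1 + C₀) * (s⁻¹ * I) := by
          nlinarith [mul_nonneg (inv_nonneg.mpr hspos.le) hInn]
        linarith
    _ = (1 + C₀) * (A + s⁻¹ * I) := by ring
end
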